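/- arXiv:2511.22370 — 2 statements merged into one kernel-verified Lean document; each statement's English description precedes it below -/
import Mathlib

section
/- In the min-based reduction instance built from a simple graph H = (V, E) and an odd integer k ≥ 3, under min-EQ utilities or under min-AL utilities with fixed weight w ≥ n^4, the following holds: let P be the player set of any one of the circulant gadgets (a set P_v, P_e, or P_{v,e}) and let p* be its distinguished player (the unique player of P that has friends outside P). If a coalition C ⊆ N blocks the coalition structure Γ, then C ∩ P ⊆ {p*}. -/
open Finset
open scoped Classical

section AHGDefs

variable {N : Type*} [Fintype N] [DecidableEq N]

/-- The set of friends of player `i` inside coalition `C`. -/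
noncomputable def friendsIn (G : SimpleGraph N) (C : Finset N) (i : N) : Finset N :=
  C.filter fun j => G.Adj i j

/-- The friend-oriented valuation of coalition `C` by player `i`:
`val_i(C) = n·|F_i ∩ C| − |E_i ∩ C|`. -/
noncomputable def fval (G : SimpleGraph N) (C : Finset N) (i : N) : ℤ :=
  (Fintype.card N : ℤ) * ((friendsIn G C i).card : ℤ)
    - ((C.filter fun j => ¬ G.Adj i j ∧ j ≠ i).card : ℤ)

/-- Average-based equal-treatment utility. -/
noncomputable def utilAvgEQ (G : SimpleGraph N) (C : Finset N) (i : N) : ℚ :=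
  (∑ c ∈ insert i (friendsIn G C i), (fval G C c : ℚ)) /
    ((insert i (friendsIn G C i)).card : ℚ)

/-- Average-based altruistic-treatment utility with weight `w`. -/
noncomputable def utilAvgAL (G : SimpleGraph N) (w : ℚ) (C : Finset N) (i : N) : ℚ :=
  (fval G C i : ℚ) +
    w * (if (friendsIn G C i).Nonempty then
          (∑ c ∈ friendsIn G C i, (fval G C c : ℚ)) / ((friendsIn G C i).card : ℚ)
         else 0)

/-- Min-based equal-treatment utility. -/
noncomputable def utilMinEQ (G : SimpleGraph N) (C : Finset N) (i : N) : ℤ :=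
  (insert i (friendsIn G C i)).inf' (insert_nonempty _ _) (fval G C)

/-- Min-based altruistic-treatment utility with weight `w`. -/
noncomputable def utilMinAL (G : SimpleGraph N) (w : ℤ) (C : Finset N) (i : N) : ℤ :=
  fval G C i +
    w * (if h : (friendsIn G C i).Nonempty then (friendsIn G C i).inf' h (fval G C) else 0)

/-- A coalition structure (partition of the players), given as the map sending
each player to its coalition. -/
structure CoalitionStructure (N : Type*) [Fintype N] [DecidableEq N] where
  part : N → Finset N
  mem_part : ∀ i, i ∈ part i
  part_eq : ∀ i j, j ∈ part i → part j = part i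

/-- A (nonempty) coalition `C` blocks the coalition structure `Γ`. -/
def Blocks {α : Type*} [LT α] (util : Finset N → N → α) (Γ : CoalitionStructure N)
    (C : Finset N) : Prop :=
  C.Nonempty ∧ ∀ i ∈ C, util (Γ.part i) i < util C i

/-- Core stability: no nonempty coalition blocks `Γ`. -/
def CoreStable {α : Type*} [LT α] (util : Finset N → N → α)
    (Γ : CoalitionStructure N) : Prop :=
  ¬ ∃ C : Finset N, Blocks util Γ C

/-- Cyclic distance between two positions on a cycle of length `k'`. -/
def cycDist (k' : ℕ) (a b : Fin k') : ℕ :=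
  min ((a.val + k' - b.val) % k') ((b.val + k' - a.val) % k')

/-- `P` carries an `(r,k')`-circulant gadget of `G`: its `k'` players are arranged
along a cycle of length `k'`, and two players are adjacent iff their distance along
the cycle is at most `r/2` (so each player has `r` friends in the gadget). -/
def IsCirculantGadget (G : SimpleGraph N) (r k' : ℕ) (P : Finset N) : Prop :=
  ∃ f : Fin k' → N, Function.Injective f ∧ Finset.univ.image f = P ∧
    ∀ a b : Fin k', (G.Adj (f a) (f b) ↔ (a ≠ b ∧ cycDist k' a b ≤ r / 2))

/-- The gadget size `k' = k·(k choose 2) + k + 1` of the min-based reduction. -/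
def minK' (k : ℕ) : ℕ := k * Nat.choose k 2 + k + 1

variable {V : Type*} [Fintype V] [DecidableEq V]

/-- The min-based reduction instance built from the graph `H` and an odd `k ≥ 3`:
`G` is the constructed network of friends on the player set `N`; `Pv v`, `Pe e`, and
`Pve v e` are the player sets of the `(k−1,k')`-circulant vertex, edge, and incidence
gadgets with distinguished players `vp v`, `ep e`, and `bp v e` respectively; `Ae e`
are the `k−3` dummy players of edge `e`, forming a clique. Each `bp v e` is further
adjacent to `vp v` and `ep e`, each dummy in `Ae e` to `ep e` and to both incidence
players of `e`, and there are no other edges. -/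
structure MinReduction (H : SimpleGraph V) (k : ℕ) (G : SimpleGraph N)
    (Pv : V → Finset N) (Pe : Sym2 V → Finset N) (Pve : V → Sym2 V → Finset N)
    (Ae : Sym2 V → Finset N) (vp : V → N) (ep : Sym2 V → N) (bp : V → Sym2 V → N) :
    Prop where
  circ_v : ∀ v : V, IsCirculantGadget G (k - 1) (minK' k) (Pv v)
  circ_e : ∀ e ∈ H.edgeSet, IsCirculantGadget G (k - 1) (minK' k) (Pe e)
  circ_ve : ∀ (v : V), ∀ e ∈ H.edgeSet, v ∈ e →
    IsCirculantGadget G (k - 1) (minK' k) (Pve v e)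
  vp_mem : ∀ v : V, vp v ∈ Pv v
  ep_mem : ∀ e ∈ H.edgeSet, ep e ∈ Pe e
  bp_mem : ∀ (v : V), ∀ e ∈ H.edgeSet, v ∈ e → bp v e ∈ Pve v e
  Ae_card : ∀ e ∈ H.edgeSet, (Ae e).card = k - 3
  Ae_clique : ∀ e ∈ H.edgeSet, ∀ a ∈ Ae e, ∀ b ∈ Ae e, a ≠ b → G.Adj a b
  disj_vv : ∀ v w : V, v ≠ w → Disjoint (Pv v) (Pv w)
  disj_ee : ∀ e ∈ H.edgeSet, ∀ f ∈ H.edgeSet, e ≠ f → Disjoint (Pe e) (Pe f)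
  disj_bb : ∀ (v : V), ∀ e ∈ H.edgeSet, v ∈ e → ∀ (w : V), ∀ f ∈ H.edgeSet, w ∈ f →
    (v, e) ≠ (w, f) → Disjoint (Pve v e) (Pve w f)
  disj_aa : ∀ e ∈ H.edgeSet, ∀ f ∈ H.edgeSet, e ≠ f → Disjoint (Ae e) (Ae f)
  disj_v_e : ∀ (v : V), ∀ e ∈ H.edgeSet, Disjoint (Pv v) (Pe e)
  disj_v_b : ∀ (v w : V), ∀ f ∈ H.edgeSet, w ∈ f → Disjoint (Pv v) (Pve w f)
  disj_v_a : ∀ (v : V), ∀ e ∈ H.edgeSet, Disjoint (Pv v) (Ae e)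
  disj_e_b : ∀ e ∈ H.edgeSet, ∀ (w : V), ∀ f ∈ H.edgeSet, w ∈ f →
    Disjoint (Pe e) (Pve w f)
  disj_e_a : ∀ e ∈ H.edgeSet, ∀ f ∈ H.edgeSet, Disjoint (Pe e) (Ae f)
  disj_b_a : ∀ (v : V), ∀ e ∈ H.edgeSet, v ∈ e → ∀ f ∈ H.edgeSet,
    Disjoint (Pve v e) (Ae f)
  cover : ∀ x : N, (∃ v : V, x ∈ Pv v) ∨ (∃ e ∈ H.edgeSet, x ∈ Pe e) ∨
    (∃ (v : V), ∃ e ∈ H.edgeSet, v ∈ e ∧ x ∈ Pve v e) ∨ (∃ e ∈ H.edgeSet, x ∈ Ae e)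
  adj_bv : ∀ (v : V), ∀ e ∈ H.edgeSet, v ∈ e → G.Adj (bp v e) (vp v)
  adj_be : ∀ (v : V), ∀ e ∈ H.edgeSet, v ∈ e → G.Adj (bp v e) (ep e)
  adj_ae : ∀ e ∈ H.edgeSet, ∀ a ∈ Ae e, G.Adj a (ep e)
  adj_ab : ∀ (v : V), ∀ e ∈ H.edgeSet, v ∈ e → ∀ a ∈ Ae e, G.Adj a (bp v e)
  adj_cases : ∀ x y : N, G.Adj x y →
    (∃ v : V, x ∈ Pv v ∧ y ∈ Pv v) ∨
    (∃ e ∈ H.edgeSet, x ∈ Pe e ∧ y ∈ Pe e) ∨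
    (∃ (v : V), ∃ e ∈ H.edgeSet, v ∈ e ∧ x ∈ Pve v e ∧ y ∈ Pve v e) ∨
    (∃ e ∈ H.edgeSet, x ∈ Ae e ∧ y ∈ Ae e) ∨
    (∃ (v : V), ∃ e ∈ H.edgeSet, v ∈ e ∧
      ((x = bp v e ∧ y = vp v) ∨ (y = bp v e ∧ x = vp v))) ∨
    (∃ (v : V), ∃ e ∈ H.edgeSet, v ∈ e ∧
      ((x = bp v e ∧ y = ep e) ∨ (y = bp v e ∧ x = ep e))) ∨
    (∃ e ∈ H.edgeSet, (x ∈ Ae e ∧ y = ep e) ∨ (y ∈ Ae e ∧ x = ep e)) ∨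
    (∃ (v : V), ∃ e ∈ H.edgeSet, v ∈ e ∧
      ((x ∈ Ae e ∧ y = bp v e) ∨ (y ∈ Ae e ∧ x = bp v e)))

/-- `Γ` is the coalition structure of the min-based reduction instance: its coalitions
are exactly the gadget player sets and the dummy sets. -/
def IsMinGamma (H : SimpleGraph V) (Pv : V → Finset N) (Pe : Sym2 V → Finset N)
    (Pve : V → Sym2 V → Finset N) (Ae : Sym2 V → Finset N)
    (Γ : CoalitionStructure N) : Prop :=
  (∀ v : V, ∀ i ∈ Pv v, Γ.part i = Pv v) ∧
  (∀ e ∈ H.edgeSet, ∀ i ∈ Pe e, Γ.part i = Pe e) ∧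
  (∀ (v : V), ∀ e ∈ H.edgeSet, v ∈ e → ∀ i ∈ Pve v e, Γ.part i = Pve v e) ∧
  (∀ e ∈ H.edgeSet, ∀ i ∈ Ae e, Γ.part i = Ae e)
end AHGDefs
open Finset
open Fin.CommRing

lemma val_sub' {k' : ℕ} [NeZero k'] (a b : Fin k') : (a - b).val = (a.val + k' - b.val) % k' := by
  rw [Fin.sub_def]
  show (k' - b.val + a.val) % k' = _
  congr 1
  have := b.isLt
  omega

lemma cycDist_eq_sub {k' : ℕ} [NeZero k'] (a b : Fin k') :
    cycDist k' a b = min (a - b).val (b - a).val := by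
  rw [cycDist, val_sub', val_sub']

lemma val_neg' {k' : ℕ} [NeZero k'] (x : Fin k') (h : x ≠ 0) : (-x).val = k' - x.val := by
  have h1 : (0:Fin k') - x = -x := by ring
  have h2 := val_sub' (0:Fin k') x
  rw [h1] at h2
  have hz : (0 : Fin k').val = 0 := rfl
  have hx : x.val ≠ 0 := by
    intro h0; exact h (Fin.ext (by rw [h0, hz]))
  have := x.isLt
  rw [h2, hz, Nat.mod_eq_of_lt (by omega)]
  omega

lemma val_sub_of_ne {k' : ℕ} [NeZero k'] (a b : Fin k') (h : a ≠ b) :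
    (a - b).val = k' - (b - a).val := by
  have h3 : a - b = -(b - a) := by ring
  rw [h3, val_neg' _ (sub_ne_zero.mpr (Ne.symm h))]

lemma circulant_count {k' m : ℕ} [NeZero k'] (hm : 1 ≤ m) (hk' : 2*m + 2 ≤ k') (a : Fin k') :
    (univ.filter fun b : Fin k' => a ≠ b ∧ cycDist k' a b ≤ m).card = 2*m := by
  have hT : ((Ioc 0 m ∪ Ico (k'-m) k' : Finset ℕ)).card = 2*m := by
    rw [Finset.card_union_of_disjoint, Nat.card_Ioc, Nat.card_Ico]
    · omega
    · rw [Finset.disjoint_left]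
      intro x hx hx'
      simp only [mem_Ioc, mem_Ico] at hx hx'
      omega
  rw [← hT]
  apply Finset.card_bij' (fun b _ => (b - a).val) (fun t _ => a + (t : Fin k'))
  · intro b hb
    simp only [mem_filter, mem_univ, true_and] at hb
    obtain ⟨hab, hcd⟩ := hb
    rw [cycDist_eq_sub, val_sub_of_ne a b hab] at hcd
    have h1 : (b - a).val ≠ 0 := by
      intro h0
      have hz : b - a = 0 := Fin.ext (by rw [h0]; rfl)
      exact hab (sub_eq_zero.mp hz).symm
    have := (b - a).isLt
    simp only [mem_union, mem_Ioc, mem_Ico]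
    omega
  · intro t ht
    simp only [mem_union, mem_Ioc, mem_Ico] at ht
    have htlt : t < k' := by omega
    have hv : ((t : Fin k')).val = t := Fin.val_cast_of_lt htlt
    have hsub : a + (t:Fin k') - a = (t:Fin k') := by ring
    have hne : a ≠ a + (t:Fin k') := by
      intro h
      have : (t : Fin k') = 0 := (left_eq_add.mp h)
      rw [this] at hv
      simp at hv
      omega
    simp only [mem_filter, mem_univ, true_and]
    refine ⟨hne, ?_⟩
    rw [cycDist_eq_sub, val_sub_of_ne _ _ hne, hsub, hv]
    omega
  · intro b hb
    rw [Fin.cast_val_eq_self]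
    ring
  · intro t ht
    simp only [mem_union, mem_Ioc, mem_Ico] at ht
    have htlt : t < k' := by omega
    have hsub : a + (t:Fin k') - a = (t:Fin k') := by ring
    rw [hsub, Fin.val_cast_of_lt htlt]

lemma cycle_cover {k' : ℕ} [NeZero k'] (S : Finset (Fin k')) (aP a0 : Fin k')
    (h0 : a0 ∈ S) (hne : a0 ≠ aP)
    (hstep : ∀ a ∈ S, a ≠ aP → a + 1 ∈ S ∧ a - 1 ∈ S) : ∀ b, b ∈ S := by
  set s := (aP - a0).val with hs
  have hklt := (aP - a0).isLt
  have hs0 : s ≠ 0 := by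
    intro h0'
    have hz : aP - a0 = 0 := Fin.ext (by rw [← hs, h0']; rfl)
    exact hne (sub_eq_zero.mp hz).symm
  have claim1 : ∀ u : ℕ, u ≤ s → a0 + (u : Fin k') ∈ S := by
    intro u
    induction u with
    | zero => intro _; simpa using h0
    | succ v ih =>
      intro hv1
      have hmem : a0 + (v : Fin k') ∈ S := ih (by omega)
      have hnep : a0 + (v : Fin k') ≠ aP := by
        intro h
        have hvv : (v : Fin k') = aP - a0 := by
          rw [← h]; ring
        have : ((v : Fin k')).val = s := by rw [hvv]
        rw [Fin.val_cast_of_lt (by omega)] at this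
        omega
      have := (hstep _ hmem hnep).1
      have hcast : ((v+1 : ℕ) : Fin k') = (v : Fin k') + 1 := by push_cast; ring
      rw [hcast]
      rw [← add_assoc]
      exact this
  have claim2 : ∀ u : ℕ, u ≤ k' - s → a0 - (u : Fin k') ∈ S := by
    intro u
    induction u with
    | zero => intro _; simpa using h0
    | succ v ih =>
      intro hv1
      have hmem : a0 - (v : Fin k') ∈ S := ih (by omega)
      have hnep : a0 - (v : Fin k') ≠ aP := by
        intro h
        have hvv : (v : Fin k') = -(aP - a0) := by
          rw [← h]; ring
        have h2 : ((v : Fin k')).val = (-(aP - a0)).val := by rw [hvv]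
        have h3 : (-(aP - a0)).val = k' - s := by
          apply val_neg'
          intro hz
          exact hne (sub_eq_zero.mp hz).symm
        rw [Fin.val_cast_of_lt (by omega), h3] at h2
        omega
      have := (hstep _ hmem hnep).2
      have hcast : ((v+1 : ℕ) : Fin k') = (v : Fin k') + 1 := by push_cast; ring
      rw [hcast]
      rw [show a0 - ((v:Fin k') + 1) = a0 - (v:Fin k') - 1 by ring]
      exact this
  intro b
  by_cases hb0 : b = a0
  · rw [hb0]; exact h0
  set t := (b - a0).val with ht
  have htlt := (b - a0).isLt
  have ht0 : t ≠ 0 := by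
    intro h0'
    exact hb0 (sub_eq_zero.mp (Fin.ext (by rw [← ht, h0']; rfl)))
  have hbt : b = a0 + (t : Fin k') := by
    rw [ht, Fin.cast_val_eq_self]; ring
  by_cases hts : t ≤ s
  · rw [hbt]; exact claim1 t hts
  · have hbu : b = a0 - ((k' - t : ℕ) : Fin k') := by
      have : a0 - b = -(b - a0) := by ring
      have h4 : (a0 - b).val = k' - t := by
        rw [this, val_neg' _ (fun hz => hb0 (sub_eq_zero.mp hz))]
      have h5 : a0 - b = ((k' - t : ℕ) : Fin k') := by
        rw [← h4, Fin.cast_val_eq_self]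
      rw [← h5]; ring
    rw [hbu]
    exact claim2 (k' - t) (by omega)

section Main
variable {N : Type*} [Fintype N] [DecidableEq N]

set_option maxHeartbeats 1000000 in
lemma main_gadget (G : SimpleGraph N) (k : ℕ) (hk : 3 ≤ k) (hodd : Odd k)
    (w : ℤ) (hw : (Fintype.card N : ℤ) ^ 4 ≤ w)
    (Γ : CoalitionStructure N) (P : Finset N) (p : N)
    (circ : IsCirculantGadget G (k - 1) (minK' k) P) (pmem : p ∈ P)
    (hfr : ∀ z ∈ P, z ≠ p → ∀ y, G.Adj z y → y ∈ P)
    (hΓP : ∀ i ∈ P, Γ.part i = P)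
    (C : Finset N)
    (hC : Blocks (utilMinEQ G) Γ C ∨ Blocks (utilMinAL G w) Γ C) :
    ∀ x ∈ C, x ∈ P → x = p := by
  intro x hxC hxP
  by_contra hxp
  set k' : ℕ := minK' k with hk'def
  set m : ℕ := (k - 1) / 2 with hmdef
  obtain ⟨f, hinj, himg, hadj⟩ := circ
  have hck : 3 ≤ Nat.choose k 2 := by
    calc (3:ℕ) = Nat.choose 3 2 := by decide
    _ ≤ Nat.choose k 2 := Nat.choose_le_choose 2 hk
  have hk'4 : 4 * k + 1 ≤ k' := by
    have h3k : 3 * k ≤ k * Nat.choose k 2 := by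
      calc 3 * k = k * 3 := by ring
      _ ≤ k * Nat.choose k 2 := Nat.mul_le_mul_left k hck
    rw [hk'def]; unfold minK'; omega
  obtain ⟨j0, hj0⟩ := hodd
  have h2m : 2 * m = k - 1 := by omega
  have hm1 : 1 ≤ m := by omega
  haveI : NeZero k' := ⟨by omega⟩
  have hPcard : P.card = k' := by
    rw [← himg, Finset.card_image_of_injective _ hinj, Finset.card_univ, Fintype.card_fin]
  have hnk' : k' ≤ Fintype.card N := hPcard ▸ Finset.card_le_univ P
  set n : ℤ := (Fintype.card N : ℤ) with hndef
  have hn0 : (k' : ℤ) ≤ n := by rw [hndef]; exact_mod_cast hnk'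
  have hkz : (3:ℤ) ≤ (k:ℤ) := by exact_mod_cast hk
  have hk'z : 4*(k:ℤ) + 1 ≤ (k':ℤ) := by exact_mod_cast hk'4
  have hn13 : 13 ≤ n := by linarith
  -- friends inside P
  have hfrP : ∀ a : Fin k', friendsIn G P (f a)
      = (univ.filter fun b : Fin k' => a ≠ b ∧ cycDist k' a b ≤ m).image f := by
    intro a
    ext y
    constructor
    · intro hy
      have hy' : y ∈ P ∧ G.Adj (f a) y := Finset.mem_filter.mp hy
      have hyP := hy'.1
      rw [← himg] at hyP
      obtain ⟨b, -, rfl⟩ := Finset.mem_image.mp hyP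
      exact Finset.mem_image_of_mem f
        (Finset.mem_filter.mpr ⟨Finset.mem_univ b, (hadj a b).mp hy'.2⟩)
    · intro hy
      obtain ⟨b, hb, rfl⟩ := Finset.mem_image.mp hy
      have hb' := (Finset.mem_filter.mp hb).2
      exact Finset.mem_filter.mpr
        ⟨by rw [← himg]; exact Finset.mem_image_of_mem f (Finset.mem_univ b),
         (hadj a b).mpr hb'⟩
  have hfrPcard : ∀ c ∈ P, (friendsIn G P c).card = k - 1 := by
    intro c hc
    rw [← himg] at hc
    obtain ⟨a, -, rfl⟩ := Finset.mem_image.mp hc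
    rw [hfrP a, Finset.card_image_of_injective _ hinj,
      circulant_count hm1 (by omega) a, h2m]
  have hENPcard : ∀ c ∈ P, (P.filter fun j => ¬ G.Adj c j ∧ j ≠ c).card = k' - k := by
    intro c hc
    have hkey : (P.filter fun j => ¬ G.Adj c j ∧ j ≠ c)
        = P \ insert c (friendsIn G P c) := by
      ext y
      simp only [mem_filter, mem_sdiff, mem_insert, friendsIn, not_or]
      tauto
    rw [hkey, Finset.card_sdiff_of_subset]
    · rw [Finset.card_insert_of_notMem, hfrPcard c hc, hPcard]
      · omega
      · exact fun hmem => G.irrefl (Finset.mem_filter.mp hmem).2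
    · intro y hy
      rcases Finset.mem_insert.mp hy with h | h
      · rwa [h]
      · exact Finset.mem_of_mem_filter y (by simpa [friendsIn] using h)
  set base : ℤ := n * ((k:ℤ) - 1) - ((k':ℤ) - (k:ℤ)) with hbasedef
  have hfvalP : ∀ c ∈ P, fval G P c = base := by
    intro c hc
    rw [fval, hfrPcard c hc, hENPcard c hc]
    have e1 : ((k - 1 : ℕ) : ℤ) = (k:ℤ) - 1 := by omega
    have e2 : ((k' - k : ℕ) : ℤ) = (k':ℤ) - (k:ℤ) := by omega
    rw [e1, e2, hbasedef]
  have hutilEQ : ∀ i ∈ P, utilMinEQ G (Γ.part i) i = base := by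
    intro i hi
    rw [hΓP i hi]
    unfold utilMinEQ
    apply le_antisymm
    · exact le_trans (Finset.inf'_le _ (Finset.mem_insert_self i _)) (le_of_eq (hfvalP i hi))
    · apply Finset.le_inf'
      intro c hc
      rcases Finset.mem_insert.mp hc with h | h
      · rw [h]; exact (hfvalP i hi).ge
      · exact (hfvalP c (Finset.mem_of_mem_filter c (by simpa [friendsIn] using h))).ge
  have hfrPnonempty : ∀ i ∈ P, (friendsIn G P i).Nonempty := by
    intro i hi
    rw [← Finset.card_pos, hfrPcard i hi]; omega
  have hutilAL : ∀ i ∈ P, utilMinAL G w (Γ.part i) i = base + w * base := by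
    intro i hi
    rw [hΓP i hi]
    unfold utilMinAL
    rw [dif_pos (hfrPnonempty i hi), hfvalP i hi]
    have hinf : (friendsIn G P i).inf' (hfrPnonempty i hi) (fval G P) = base := by
      apply le_antisymm
      · obtain ⟨c, hc⟩ := hfrPnonempty i hi
        exact le_trans (Finset.inf'_le _ hc)
          (le_of_eq (hfvalP c (Finset.mem_of_mem_filter c (by simpa [friendsIn] using hc))))
      · exact Finset.le_inf' _ _ fun c hc =>
          (hfvalP c (Finset.mem_of_mem_filter c (by simpa [friendsIn] using hc))).ge
    rw [hinf]
  have hnn0 : (0:ℤ) ≤ n := by linarith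
  have hfvalUBgen : ∀ (D : Finset N) (i : N), fval G D i ≤ n * n := by
    intro D i
    rw [fval]
    have h1 : ((friendsIn G D i).card : ℤ) ≤ n := by
      rw [hndef]; exact_mod_cast Finset.card_le_univ _
    have h2 : n * ((friendsIn G D i).card:ℤ) ≤ n * n := mul_le_mul_of_nonneg_left h1 hnn0
    have h3 : (0:ℤ) ≤ ((D.filter fun j => ¬ G.Adj i j ∧ j ≠ i).card : ℤ) := Int.natCast_nonneg _
    linarith
  have hbase_ge : n + 3 ≤ base := by
    have h2 : 2*n ≤ n*((k:ℤ)-1) := by nlinarith [mul_nonneg hnn0 (by linarith : (0:ℤ) ≤ (k:ℤ)-3)]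
    rw [hbasedef]; linarith
  have hnnw : n*n ≤ w := by
    have h1 : n^2 ≤ n^4 := pow_le_pow_right₀ (by linarith) (by norm_num)
    have h2 : n*n = n^2 := by ring
    linarith
  have hw0 : (0:ℤ) ≤ w := le_trans (by positivity) hw
  -- unified lower bound on valuations of blocking-coalition members
  have hLB : ∀ i ∈ C, i ∈ P → i ≠ p → base ≤ fval G C i := by
    rcases hC with hB | hB
    · intro i hiC hiP _
      have hlt := hB.2 i hiC
      rw [hutilEQ i hiP] at hlt
      have h2 : utilMinEQ G C i ≤ fval G C i :=
        Finset.inf'_le _ (Finset.mem_insert_self i _)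
      linarith
    · have hMin : ∀ c ∈ C, c ∈ P → ∀ (hne : (friendsIn G C c).Nonempty),
          base ≤ (friendsIn G C c).inf' hne (fval G C) := by
        intro c hcC hcP hne
        have hlt := hB.2 c hcC
        rw [hutilAL c hcP] at hlt
        unfold utilMinAL at hlt
        rw [dif_pos hne] at hlt
        by_contra hcon
        push_neg at hcon
        have hle : (friendsIn G C c).inf' hne (fval G C) ≤ base - 1 := by omega
        have h3 : w * ((friendsIn G C c).inf' hne (fval G C)) ≤ w * (base - 1) :=
          mul_le_mul_of_nonneg_left hle hw0
        have h4 := hfvalUBgen C c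
        have h5 : w * (base - 1) = w * base - w := by ring
        linarith
      intro i hiC hiP hip
      have hlt := hB.2 i hiC
      rw [hutilAL i hiP] at hlt
      unfold utilMinAL at hlt
      have hne : (friendsIn G C i).Nonempty := by
        by_contra hempty
        rw [dif_neg hempty] at hlt
        have h4 := hfvalUBgen C i
        have h5 : w * 1 ≤ w * base := mul_le_mul_of_nonneg_left (by linarith) hw0
        linarith
      obtain ⟨c, hc⟩ := hne
      have hcC : c ∈ C := Finset.mem_of_mem_filter c (by simpa [friendsIn] using hc)
      have hadj_ic : G.Adj i c := by
        have := Finset.mem_filter.mp (by simpa [friendsIn] using hc : c ∈ C.filter fun j => G.Adj i j)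
        exact this.2
      have hcP : c ∈ P := hfr i hiP hip c hadj_ic
      have hiInc : i ∈ friendsIn G C c := by
        rw [friendsIn]
        exact Finset.mem_filter.mpr ⟨hiC, hadj_ic.symm⟩
      have hne2 : (friendsIn G C c).Nonempty := ⟨i, hiInc⟩
      exact le_trans (hMin c hcC hcP hne2) (Finset.inf'_le _ hiInc)
  have hfrCsub : ∀ z, z ∈ P → z ≠ p → friendsIn G C z ⊆ friendsIn G P z := by
    intro z hzP hzp y hy
    rw [friendsIn, Finset.mem_filter] at hy
    rw [friendsIn]
    exact Finset.mem_filter.mpr ⟨hfr z hzP hzp y hy.2, hy.2⟩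
  have hprop : ∀ z ∈ C, z ∈ P → z ≠ p → friendsIn G P z ⊆ C := by
    intro z hzC hzP hzp
    have hsub := hfrCsub z hzP hzp
    have hcardle : (k - 1 : ℤ) ≤ ((friendsIn G C z).card : ℤ) := by
      by_contra hcon
      push_neg at hcon
      have hle : ((friendsIn G C z).card:ℤ) ≤ (k:ℤ) - 2 := by omega
      have h1 : n * ((friendsIn G C z).card:ℤ) ≤ n * ((k:ℤ)-2) :=
        mul_le_mul_of_nonneg_left hle hnn0
      have h2 := hLB z hzC hzP hzp
      rw [fval, hbasedef] at h2
      have he : (0:ℤ) ≤ ((C.filter fun j => ¬ G.Adj z j ∧ j ≠ z).card : ℤ) := Int.natCast_nonneg _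
      have hx1 : n * ((k:ℤ)-1) - n*((k:ℤ)-2) = n := by ring
      linarith
    have hcard2 : (friendsIn G P z).card ≤ (friendsIn G C z).card := by
      rw [hfrPcard z hzP]; omega
    have heq := Finset.eq_of_subset_of_card_le hsub hcard2
    rw [← heq]
    rw [friendsIn]
    exact Finset.filter_subset _ C
  -- cover the whole gadget
  have hxP' := hxP
  rw [← himg] at hxP'
  obtain ⟨a0, -, hfa0⟩ := Finset.mem_image.mp hxP'
  have hpP := pmem
  rw [← himg] at hpP
  obtain ⟨aP, -, hfaP⟩ := Finset.mem_image.mp hpP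
  have hone : (1 : Fin k').val = 1 := by
    rw [← Nat.cast_one, Fin.val_cast_of_lt (by omega)]
  have hone0 : (1 : Fin k') ≠ 0 := by
    intro h
    have : (1 : Fin k').val = (0 : Fin k').val := by rw [h]
    rw [hone] at this
    exact one_ne_zero this
  have hmemP : ∀ a : Fin k', f a ∈ P := by
    intro a
    rw [← himg]; exact Finset.mem_image_of_mem f (Finset.mem_univ a)
  have hstepf : ∀ a : Fin k', f a ∈ C → f a ≠ p → f (a+1) ∈ C ∧ f (a-1) ∈ C := by
    intro a haC hap
    have hsubC := hprop (f a) haC (hmemP a) hap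
    constructor
    · apply hsubC
      rw [hfrP a]
      apply Finset.mem_image_of_mem
      simp only [Finset.mem_filter, Finset.mem_univ, true_and]
      constructor
      · intro h
        exact hone0 (left_eq_add.mp h)
      · rw [cycDist_eq_sub]
        have h1 : a + 1 - a = 1 := by ring
        rw [h1, hone]
        exact le_trans (min_le_right _ _) hm1
    · apply hsubC
      rw [hfrP a]
      apply Finset.mem_image_of_mem
      simp only [Finset.mem_filter, Finset.mem_univ, true_and]
      constructor
      · intro h
        have h2 : a = a + 1 := by
          have := sub_eq_iff_eq_add.mp h.symm
          exact this
        exact hone0 (left_eq_add.mp h2)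
      · rw [cycDist_eq_sub]
        have h1 : a - (a - 1) = 1 := by ring
        rw [h1, hone]
        exact le_trans (min_le_left _ _) hm1
  have ha0aP : a0 ≠ aP := by
    intro h
    exact hxp (by rw [← hfa0, h, hfaP])
  have hcover := cycle_cover (univ.filter (fun a : Fin k' => f a ∈ C)) aP a0
    (by simp [hfa0, hxC]) ha0aP
    (by
      intro a haS hane
      simp only [Finset.mem_filter, Finset.mem_univ, true_and] at haS ⊢
      have hap : f a ≠ p := by
        intro h
        exact hane (hinj (by rw [h, hfaP]))
      exact hstepf a haS hap)
  have hPC : P ⊆ C := by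
    intro y hy
    rw [← himg] at hy
    obtain ⟨b, -, rfl⟩ := Finset.mem_image.mp hy
    have := hcover b
    simpa using this
  -- upper bound on valuations
  have hvalUB : ∀ z ∈ P, z ≠ p → fval G C z ≤ base := by
    intro z hzP hzp
    have hsub := hfrCsub z hzP hzp
    have h1 : ((friendsIn G C z).card : ℤ) ≤ (k:ℤ) - 1 := by
      have := Finset.card_le_card hsub
      rw [hfrPcard z hzP] at this
      omega
    have h2 : ((k':ℤ) - k) ≤ ((C.filter fun j => ¬ G.Adj z j ∧ j ≠ z).card : ℤ) := by
      have hsubE : (P.filter fun j => ¬ G.Adj z j ∧ j ≠ z)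
          ⊆ (C.filter fun j => ¬ G.Adj z j ∧ j ≠ z) :=
        Finset.filter_subset_filter _ hPC
      have := Finset.card_le_card hsubE
      rw [hENPcard z hzP] at this
      omega
    rw [fval, hbasedef]
    have h3 : n * ((friendsIn G C z).card:ℤ) ≤ n * ((k:ℤ)-1) :=
      mul_le_mul_of_nonneg_left h1 hnn0
    linarith
  -- final contradiction
  rcases hC with hB | hB
  · have hlt := hB.2 x hxC
    rw [hutilEQ x hxP] at hlt
    have h2 : utilMinEQ G C x ≤ fval G C x :=
      Finset.inf'_le _ (Finset.mem_insert_self x _)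
    have h3 := hvalUB x hxP hxp
    linarith
  · have hlt := hB.2 x hxC
    rw [hutilAL x hxP] at hlt
    unfold utilMinAL at hlt
    have hex : ∃ j ∈ friendsIn G P x, j ≠ p := by
      by_contra hcon
      push_neg at hcon
      have hs : friendsIn G P x ⊆ {p} := fun j hj => Finset.mem_singleton.mpr (hcon j hj)
      have := Finset.card_le_card hs
      rw [hfrPcard x hxP, Finset.card_singleton] at this
      omega
    obtain ⟨j, hjfr, hjp⟩ := hex
    have hjC : j ∈ C := hprop x hxC hxP hxp hjfr
    have hjadj : G.Adj x j := by
      have := Finset.mem_filter.mp (by simpa [friendsIn] using hjfr : j ∈ P.filter fun y => G.Adj x y)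
      exact this.2
    have hjCfr : j ∈ friendsIn G C x := by
      rw [friendsIn]; exact Finset.mem_filter.mpr ⟨hjC, hjadj⟩
    have hne : (friendsIn G C x).Nonempty := ⟨j, hjCfr⟩
    rw [dif_pos hne] at hlt
    have h1 : (friendsIn G C x).inf' hne (fval G C) ≤ fval G C j := Finset.inf'_le _ hjCfr
    have hjP : j ∈ P := Finset.mem_of_mem_filter j (by simpa [friendsIn] using hjfr)
    have h2 : fval G C j ≤ base := hvalUB j hjP hjp
    have h3 : fval G C x ≤ base := hvalUB x hxP hxp
    have h4 : w * ((friendsIn G C x).inf' hne (fval G C)) ≤ w * base :=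
      mul_le_mul_of_nonneg_left (le_trans h1 h2) hw0
    linarith
end Main

/-- Claim 1: in the min-based reduction instance, under min-EQ or min-AL utilities
(with weight `w ≥ n^4`), if `P` is the player set of one of the circulant gadgets
with distinguished player `p`, and a coalition `C` blocks `Γ`, then `C ∩ P ⊆ {p}`. -/
theorem min_blocking_meets_circulant_only_in_distinguished {V N : Type*}
    [Fintype V] [DecidableEq V] [Fintype N] [DecidableEq N]
    (H : SimpleGraph V) (k : ℕ) (hk : 3 ≤ k) (hodd : Odd k)
    (G : SimpleGraph N) (Pv : V → Finset N) (Pe : Sym2 V → Finset N)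
    (Pve : V → Sym2 V → Finset N) (Ae : Sym2 V → Finset N)
    (vp : V → N) (ep : Sym2 V → N) (bp : V → Sym2 V → N)
    (R : MinReduction H k G Pv Pe Pve Ae vp ep bp)
    (w : ℤ) (hw : (Fintype.card N : ℤ) ^ 4 ≤ w)
    (Γ : CoalitionStructure N) (hΓ : IsMinGamma H Pv Pe Pve Ae Γ)
    (P : Finset N) (p : N)
    (hP : (∃ v : V, P = Pv v ∧ p = vp v) ∨
          (∃ e ∈ H.edgeSet, P = Pe e ∧ p = ep e) ∨
          (∃ (v : V), ∃ e ∈ H.edgeSet, v ∈ e ∧ P = Pve v e ∧ p = bp v e))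
    (C : Finset N)
    (hC : Blocks (utilMinEQ G) Γ C ∨ Blocks (utilMinAL G w) Γ C) :
    ∀ x ∈ C, x ∈ P → x = p := by

  rcases hP with ⟨v0, hPeq, hpeq⟩ | ⟨e0, he0, hPeq, hpeq⟩ | ⟨v0, e0, he0, hv0, hPeq, hpeq⟩
  · -- vertex gadget
    subst hPeq hpeq
    apply main_gadget G k hk hodd w hw Γ (Pv v0) (vp v0) (R.circ_v v0) (R.vp_mem v0) _
      (hΓ.1 v0) C hC
    intro z hzP hzp y hadjzy
    rcases R.adj_cases z y hadjzy with ⟨v', hz, hy⟩ | ⟨e, he, hz, hy⟩ |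
      ⟨v', e, he, hve, hz, hy⟩ | ⟨e, he, hz, hy⟩ | ⟨v', e, he, hve, hcase⟩ |
      ⟨v', e, he, hve, hcase⟩ | ⟨e, he, hcase⟩ | ⟨v', e, he, hve, hcase⟩
    · by_cases hvv : v' = v0
      · subst hvv; exact hy
      · exact absurd hz (Finset.disjoint_left.mp (R.disj_vv v0 v' (Ne.symm hvv)) hzP)
    · exact absurd hz (Finset.disjoint_left.mp (R.disj_v_e v0 e he) hzP)
    · exact absurd hz (Finset.disjoint_left.mp (R.disj_v_b v0 v' e he hve) hzP)
    · exact absurd hz (Finset.disjoint_left.mp (R.disj_v_a v0 e he) hzP)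
    · rcases hcase with ⟨hzb, hyv⟩ | ⟨hyb, hzv⟩
      · exact absurd (hzb ▸ R.bp_mem v' e he hve)
          (Finset.disjoint_left.mp (R.disj_v_b v0 v' e he hve) hzP)
      · by_cases hvv : v' = v0
        · exact absurd (hzv.trans (by rw [hvv])) hzp
        · exact absurd (hzv ▸ R.vp_mem v')
            (Finset.disjoint_left.mp (R.disj_vv v0 v' (Ne.symm hvv)) hzP)
    · rcases hcase with ⟨hzb, hye⟩ | ⟨hyb, hze⟩
      · exact absurd (hzb ▸ R.bp_mem v' e he hve)
          (Finset.disjoint_left.mp (R.disj_v_b v0 v' e he hve) hzP)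
      · exact absurd (hze ▸ R.ep_mem e he)
          (Finset.disjoint_left.mp (R.disj_v_e v0 e he) hzP)
    · rcases hcase with ⟨hza, hye⟩ | ⟨hya, hze⟩
      · exact absurd hza (Finset.disjoint_left.mp (R.disj_v_a v0 e he) hzP)
      · exact absurd (hze ▸ R.ep_mem e he)
          (Finset.disjoint_left.mp (R.disj_v_e v0 e he) hzP)
    · rcases hcase with ⟨hza, hyb⟩ | ⟨hya, hzb⟩
      · exact absurd hza (Finset.disjoint_left.mp (R.disj_v_a v0 e he) hzP)
      · exact absurd (hzb ▸ R.bp_mem v' e he hve)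
          (Finset.disjoint_left.mp (R.disj_v_b v0 v' e he hve) hzP)
  · -- edge gadget
    subst hPeq hpeq
    apply main_gadget G k hk hodd w hw Γ (Pe e0) (ep e0) (R.circ_e e0 he0)
      (R.ep_mem e0 he0) _ (hΓ.2.1 e0 he0) C hC
    intro z hzP hzp y hadjzy
    rcases R.adj_cases z y hadjzy with ⟨v', hz, hy⟩ | ⟨e, he, hz, hy⟩ |
      ⟨v', e, he, hve, hz, hy⟩ | ⟨e, he, hz, hy⟩ | ⟨v', e, he, hve, hcase⟩ |
      ⟨v', e, he, hve, hcase⟩ | ⟨e, he, hcase⟩ | ⟨v', e, he, hve, hcase⟩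
    · exact absurd hzP (Finset.disjoint_left.mp (R.disj_v_e v' e0 he0) hz)
    · by_cases hee : e = e0
      · subst hee; exact hy
      · exact absurd hz (Finset.disjoint_left.mp (R.disj_ee e0 he0 e he (Ne.symm hee)) hzP)
    · exact absurd hz (Finset.disjoint_left.mp (R.disj_e_b e0 he0 v' e he hve) hzP)
    · exact absurd hz (Finset.disjoint_left.mp (R.disj_e_a e0 he0 e he) hzP)
    · rcases hcase with ⟨hzb, hyv⟩ | ⟨hyb, hzv⟩
      · exact absurd (hzb ▸ R.bp_mem v' e he hve)
          (Finset.disjoint_left.mp (R.disj_e_b e0 he0 v' e he hve) hzP)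
      · exact absurd hzP (Finset.disjoint_left.mp (R.disj_v_e v' e0 he0) (hzv ▸ R.vp_mem v'))
    · rcases hcase with ⟨hzb, hye⟩ | ⟨hyb, hze⟩
      · exact absurd (hzb ▸ R.bp_mem v' e he hve)
          (Finset.disjoint_left.mp (R.disj_e_b e0 he0 v' e he hve) hzP)
      · by_cases hee : e = e0
        · exact absurd (hze.trans (by rw [hee])) hzp
        · exact absurd (hze ▸ R.ep_mem e he)
            (Finset.disjoint_left.mp (R.disj_ee e0 he0 e he (Ne.symm hee)) hzP)
    · rcases hcase with ⟨hza, hye⟩ | ⟨hya, hze⟩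
      · exact absurd hza (Finset.disjoint_left.mp (R.disj_e_a e0 he0 e he) hzP)
      · by_cases hee : e = e0
        · exact absurd (hze.trans (by rw [hee])) hzp
        · exact absurd (hze ▸ R.ep_mem e he)
            (Finset.disjoint_left.mp (R.disj_ee e0 he0 e he (Ne.symm hee)) hzP)
    · rcases hcase with ⟨hza, hyb⟩ | ⟨hya, hzb⟩
      · exact absurd hza (Finset.disjoint_left.mp (R.disj_e_a e0 he0 e he) hzP)
      · exact absurd (hzb ▸ R.bp_mem v' e he hve)
          (Finset.disjoint_left.mp (R.disj_e_b e0 he0 v' e he hve) hzP)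
  · -- incidence gadget
    subst hPeq hpeq
    apply main_gadget G k hk hodd w hw Γ (Pve v0 e0) (bp v0 e0) (R.circ_ve v0 e0 he0 hv0)
      (R.bp_mem v0 e0 he0 hv0) _ (hΓ.2.2.1 v0 e0 he0 hv0) C hC
    intro z hzP hzp y hadjzy
    rcases R.adj_cases z y hadjzy with ⟨v', hz, hy⟩ | ⟨e, he, hz, hy⟩ |
      ⟨v', e, he, hve, hz, hy⟩ | ⟨e, he, hz, hy⟩ | ⟨v', e, he, hve, hcase⟩ |
      ⟨v', e, he, hve, hcase⟩ | ⟨e, he, hcase⟩ | ⟨v', e, he, hve, hcase⟩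
    · exact absurd hzP (Finset.disjoint_left.mp (R.disj_v_b v' v0 e0 he0 hv0) hz)
    · exact absurd hzP (Finset.disjoint_left.mp (R.disj_e_b e he v0 e0 he0 hv0) hz)
    · by_cases hpair : (v', e) = (v0, e0)
      · have h1 : v' = v0 := congrArg Prod.fst hpair
        have h2 : e = e0 := congrArg Prod.snd hpair
        subst h1; subst h2; exact hy
      · exact absurd hzP
          (Finset.disjoint_left.mp (R.disj_bb v' e he hve v0 e0 he0 hv0 hpair) hz)
    · exact absurd hz (Finset.disjoint_left.mp (R.disj_b_a v0 e0 he0 hv0 e he) hzP)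
    · rcases hcase with ⟨hzb, hyv⟩ | ⟨hyb, hzv⟩
      · by_cases hpair : (v', e) = (v0, e0)
        · have h1 : v' = v0 := congrArg Prod.fst hpair
          have h2 : e = e0 := congrArg Prod.snd hpair
          exact absurd (hzb.trans (by rw [h1, h2])) hzp
        · exact absurd (hzb ▸ R.bp_mem v' e he hve)
            (Finset.disjoint_left.mp
              (R.disj_bb v0 e0 he0 hv0 v' e he hve (fun h => hpair h.symm)) hzP)
      · exact absurd hzP
          (Finset.disjoint_left.mp (R.disj_v_b v' v0 e0 he0 hv0) (hzv ▸ R.vp_mem v'))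
    · rcases hcase with ⟨hzb, hye⟩ | ⟨hyb, hze⟩
      · by_cases hpair : (v', e) = (v0, e0)
        · have h1 : v' = v0 := congrArg Prod.fst hpair
          have h2 : e = e0 := congrArg Prod.snd hpair
          exact absurd (hzb.trans (by rw [h1, h2])) hzp
        · exact absurd (hzb ▸ R.bp_mem v' e he hve)
            (Finset.disjoint_left.mp
              (R.disj_bb v0 e0 he0 hv0 v' e he hve (fun h => hpair h.symm)) hzP)
      · exact absurd hzP
          (Finset.disjoint_left.mp (R.disj_e_b e he v0 e0 he0 hv0) (hze ▸ R.ep_mem e he))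
    · rcases hcase with ⟨hza, hye⟩ | ⟨hya, hze⟩
      · exact absurd hza (Finset.disjoint_left.mp (R.disj_b_a v0 e0 he0 hv0 e he) hzP)
      · exact absurd hzP
          (Finset.disjoint_left.mp (R.disj_e_b e he v0 e0 he0 hv0) (hze ▸ R.ep_mem e he))
    · rcases hcase with ⟨hza, hyb⟩ | ⟨hya, hzb⟩
      · exact absurd hza (Finset.disjoint_left.mp (R.disj_b_a v0 e0 he0 hv0 e he) hzP)
      · by_cases hpair : (v', e) = (v0, e0)
        · have h1 : v' = v0 := congrArg Prod.fst hpair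
          have h2 : e = e0 := congrArg Prod.snd hpair
          exact absurd (hzb.trans (by rw [h1, h2])) hzp
        · exact absurd (hzb ▸ R.bp_mem v' e he hve)
            (Finset.disjoint_left.mp
              (R.disj_bb v0 e0 he0 hv0 v' e he hve (fun h => hpair h.symm)) hzP)
end

section
/- In the min-based reduction instance built from a simple graph H = (V, E) and an odd integer k ≥ 3, under min-EQ utilities or under min-AL utilities with fixed weight w ≥ n^4, the following holds: if a coalition C ⊆ N blocks the coalition structure Γ, then every player i ∈ C has at least k−1 friends in C. -/
open Finset
open scoped Classical

section MyHelpers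
set_option linter.unusedSectionVars false
variable {N : Type*} [Fintype N] [DecidableEq N]

lemma mem_friendsIn {G : SimpleGraph N} {C : Finset N} {i j : N} :
    j ∈ friendsIn G C i ↔ j ∈ C ∧ G.Adj i j := by
  simp [friendsIn]

lemma friendsIn_subset (G : SimpleGraph N) (C : Finset N) (i : N) :
    friendsIn G C i ⊆ C := Finset.filter_subset _ _

lemma not_mem_friendsIn_self (G : SimpleGraph N) (C : Finset N) (i : N) :
    i ∉ friendsIn G C i := by simp [friendsIn]

lemma fval_le (G : SimpleGraph N) (C : Finset N) (i : N) :
    fval G C i ≤ (Fintype.card N : ℤ) * ((friendsIn G C i).card : ℤ) := by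
  have : (0:ℤ) ≤ ((C.filter fun j => ¬ G.Adj i j ∧ j ≠ i).card : ℤ) := by positivity
  unfold fval; linarith

lemma fval_nonpos_of_empty {G : SimpleGraph N} {C : Finset N} {i : N}
    (h : friendsIn G C i = ∅) : fval G C i ≤ 0 := by
  have h2 := fval_le G C i
  rw [h] at h2; simpa using h2

lemma enemy_bound {G : SimpleGraph N} {C : Finset N} {i : N} (hi : i ∈ C) :
    (C.filter fun j => ¬ G.Adj i j ∧ j ≠ i).card + (friendsIn G C i).card + 1 ≤ C.card := by
  classical
  set E := C.filter fun j => ¬ G.Adj i j ∧ j ≠ i with hE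
  have hdisj : Disjoint E (friendsIn G C i) := by
    rw [Finset.disjoint_left]
    intro a ha ha'
    exact (Finset.mem_filter.mp ha).2.1 (mem_friendsIn.mp ha').2
  have hnotmem : i ∉ E ∪ friendsIn G C i := by
    intro h
    rcases Finset.mem_union.mp h with h | h
    · exact (Finset.mem_filter.mp h).2.2 rfl
    · exact not_mem_friendsIn_self G C i h
  have hsub : insert i (E ∪ friendsIn G C i) ⊆ C := by
    intro a ha
    rcases Finset.mem_insert.mp ha with rfl | ha
    · exact hi
    · rcases Finset.mem_union.mp ha with h | h
      · exact Finset.filter_subset _ _ h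
      · exact friendsIn_subset G C i h
  have := Finset.card_le_card hsub
  rw [Finset.card_insert_of_notMem hnotmem, Finset.card_union_of_disjoint hdisj] at this
  omega

lemma cycDist_comm (k' : ℕ) (a b : Fin k') : cycDist k' a b = cycDist k' b a :=
  min_comm _ _

open Fin.NatCast in
lemma cycDist_add {k' : ℕ} [NeZero k'] (a : Fin k') {t : ℕ} (h1 : 1 ≤ t) (h2 : 2*t ≤ k') :
    cycDist k' a (a + (t : Fin k')) = t ∧ a + (t : Fin k') ≠ a := by
  have htlt : t < k' := by omega
  have htv : ((t : Fin k')).val = t := Fin.val_cast_of_lt htlt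
  have hb : (a + (t : Fin k')).val = (a.val + t) % k' := by
    rw [Fin.add_def, htv]
  have hav : a.val < k' := a.isLt
  constructor
  · unfold cycDist
    rcases lt_or_ge (a.val + t) k' with h | h
    · have hb' : (a + (t:Fin k')).val = a.val + t := by rw [hb, Nat.mod_eq_of_lt h]
      have e1 : (a.val + k' - (a + (t:Fin k')).val) % k' = k' - t := by
        rw [hb']
        have h3 : a.val + k' - (a.val + t) = k' - t := by omega
        rw [h3, Nat.mod_eq_of_lt (by omega)]
      have e2 : ((a + (t:Fin k')).val + k' - a.val) % k' = t := by
        rw [hb']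
        have h3 : a.val + t + k' - a.val = t + k' := by omega
        rw [h3, Nat.add_mod_right, Nat.mod_eq_of_lt htlt]
      rw [e1, e2]; omega
    · have hb' : (a + (t:Fin k')).val = a.val + t - k' := by
        rw [hb, Nat.mod_eq_sub_mod h, Nat.mod_eq_of_lt (by omega)]
      have e1 : (a.val + k' - (a + (t:Fin k')).val) % k' = k' - t := by
        rw [hb']
        have h3 : a.val + k' - (a.val + t - k') = k' + (k' - t) := by omega
        rw [h3, Nat.add_mod_left, Nat.mod_eq_of_lt (by omega)]
      have e2 : ((a + (t:Fin k')).val + k' - a.val) % k' = t := by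
        rw [hb']
        have h3 : a.val + t - k' + k' - a.val = t := by omega
        rw [h3, Nat.mod_eq_of_lt htlt]
      rw [e1, e2]; omega
  · intro heq
    have hv := congrArg Fin.val heq
    rcases lt_or_ge (a.val + t) k' with h | h
    · rw [hb, Nat.mod_eq_of_lt h] at hv; omega
    · rw [hb, Nat.mod_eq_sub_mod h, Nat.mod_eq_of_lt (by omega)] at hv; omega

open Fin.NatCast in
lemma cycDist_sub {k' : ℕ} [NeZero k'] (a : Fin k') {t : ℕ} (h1 : 1 ≤ t) (h2 : 2*t ≤ k') :
    cycDist k' a (a - (t : Fin k')) = t ∧ a - (t : Fin k') ≠ a := by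
  have h := cycDist_add (a - (t : Fin k')) h1 h2
  have hs : (a - (t : Fin k')) + (t : Fin k') = a := sub_add_cancel a _
  rw [hs] at h
  refine ⟨(cycDist_comm _ _ _).trans h.1, fun heq => h.2 ?_⟩
  rw [heq]

lemma circulant_card {G : SimpleGraph N} {r k' : ℕ} {P : Finset N}
    (h : IsCirculantGadget G r k' P) : P.card = k' := by
  obtain ⟨f, hinj, himg, -⟩ := h
  rw [← himg, Finset.card_image_of_injective _ hinj, Finset.card_univ, Fintype.card_fin]

open Fin.NatCast in
lemma circulant_deg {G : SimpleGraph N} {k k' : ℕ} (hk : 3 ≤ k) (hodd : Odd k)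
    (hkk' : k ≤ k') {P : Finset N} (h : IsCirculantGadget G (k-1) k' P) :
    ∀ g ∈ P, k - 1 ≤ (friendsIn G P g).card := by
  obtain ⟨f, hinj, himg, hadj⟩ := h
  intro g hg
  rw [← himg] at hg
  obtain ⟨a, -, rfl⟩ := Finset.mem_image.mp hg
  haveI : NeZero k' := ⟨by omega⟩
  set m := (k-1)/2 with hmdef
  have hm2 : 2 * m = k - 1 := by
    obtain ⟨j, hj⟩ := hodd; omega
  have hcast : ∀ t ∈ Finset.Icc 1 m, ((t : Fin k')).val = t := by
    intro t ht
    have := (Finset.mem_Icc.mp ht).2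
    exact Fin.val_cast_of_lt (by omega)
  have h2t : ∀ t ∈ Finset.Icc 1 m, 2 * t ≤ k' := by
    intro t ht
    have := (Finset.mem_Icc.mp ht).2
    omega
  set T : Finset (Fin k') :=
    ((Finset.Icc 1 m).image fun t : ℕ => a + (t : Fin k')) ∪
    ((Finset.Icc 1 m).image fun t : ℕ => a - (t : Fin k')) with hT
  have hsub : T.image f ⊆ friendsIn G P (f a) := by
    intro x hx
    obtain ⟨b, hbT, rfl⟩ := Finset.mem_image.mp hx
    have hbP : f b ∈ P := by
      rw [← himg]; exact Finset.mem_image_of_mem f (Finset.mem_univ b)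
    refine mem_friendsIn.mpr ⟨hbP, ?_⟩
    rw [hadj]
    rcases Finset.mem_union.mp hbT with hb | hb
    · obtain ⟨t, ht, rfl⟩ := Finset.mem_image.mp hb
      obtain ⟨hd, hne⟩ := cycDist_add a (Finset.mem_Icc.mp ht).1 (h2t t ht)
      refine ⟨Ne.symm hne, ?_⟩
      rw [hd]
      have := (Finset.mem_Icc.mp ht).2
      omega
    · obtain ⟨t, ht, rfl⟩ := Finset.mem_image.mp hb
      obtain ⟨hd, hne⟩ := cycDist_sub a (Finset.mem_Icc.mp ht).1 (h2t t ht)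
      refine ⟨Ne.symm hne, ?_⟩
      rw [hd]
      have := (Finset.mem_Icc.mp ht).2
      omega
  have hinj1 : Set.InjOn (fun t : ℕ => a + (t : Fin k')) (Finset.Icc 1 m) := by
    intro s hs t ht hst
    have h1 : (s : Fin k') = (t : Fin k') := by
      exact add_left_cancel hst
    have := congrArg Fin.val h1
    rw [hcast s hs, hcast t ht] at this
    exact this
  have hinj2 : Set.InjOn (fun t : ℕ => a - (t : Fin k')) (Finset.Icc 1 m) := by
    intro s hs t ht hst
    have h1 : (s : Fin k') = (t : Fin k') := by
      have := sub_right_injective hst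
      exact this
    have := congrArg Fin.val h1
    rw [hcast s hs, hcast t ht] at this
    exact this
  have hdisj : Disjoint ((Finset.Icc 1 m).image fun t : ℕ => a + (t : Fin k'))
      ((Finset.Icc 1 m).image fun t : ℕ => a - (t : Fin k')) := by
    rw [Finset.disjoint_left]
    intro b hb1 hb2
    obtain ⟨t, ht, rfl⟩ := Finset.mem_image.mp hb1
    obtain ⟨s, hs, hst⟩ := Finset.mem_image.mp hb2
    -- a - s = a + t
    have h1 : (a - (s : Fin k')) + (s : Fin k') = a := sub_add_cancel a _
    have h2 : a + ((t : Fin k') + (s : Fin k')) = a + 0 := by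
      rw [add_zero, ← add_assoc]
      rw [hst] at h1
      exact h1
    have h3 : (t : Fin k') + (s : Fin k') = 0 := add_left_cancel h2
    have h4 : ((t + s : ℕ) : Fin k') = 0 := by push_cast; exact h3
    have h5 := congrArg Fin.val h4
    have ht2 := Finset.mem_Icc.mp ht
    have hs2 := Finset.mem_Icc.mp hs
    rw [Fin.val_cast_of_lt (by omega)] at h5
    simp at h5
    omega
  have hcardT : T.card = k - 1 := by
    rw [hT, Finset.card_union_of_disjoint hdisj,
      Finset.card_image_of_injOn hinj1, Finset.card_image_of_injOn hinj2,
      Nat.card_Icc]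
    omega
  calc k - 1 = (T.image f).card := by
        rw [Finset.card_image_of_injective _ hinj, hcardT]
    _ ≤ (friendsIn G P (f a)).card := Finset.card_le_card hsub

lemma circ_fval_ge {G : SimpleGraph N} {k k' : ℕ} (hk : 3 ≤ k) (hodd : Odd k)
    (hkk' : k ≤ k') {P : Finset N} (hcirc : IsCirculantGadget G (k-1) k' P)
    {i : N} (hi : i ∈ P) :
    (Fintype.card N : ℤ) * ((k:ℤ) - 1) - ((k':ℤ) - (k:ℤ)) ≤ fval G P i := by
  have hdeg := circulant_deg hk hodd hkk' hcirc i hi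
  have hcard := circulant_card hcirc
  have hen := enemy_bound (G := G) hi
  rw [hcard] at hen
  have hfval : fval G P i = (Fintype.card N : ℤ) * ((friendsIn G P i).card : ℤ)
      - ((P.filter fun j => ¬ G.Adj i j ∧ j ≠ i).card : ℤ) := rfl
  have hn0 : (0:ℤ) ≤ (Fintype.card N : ℤ) := by positivity
  have hfZ : ((k:ℤ) - 1) ≤ ((friendsIn G P i).card : ℤ) := by
    have : ((k - 1 : ℕ) : ℤ) ≤ ((friendsIn G P i).card : ℤ) := by exact_mod_cast hdeg
    omega
  have henZ : ((P.filter fun j => ¬ G.Adj i j ∧ j ≠ i).card : ℤ)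
      ≤ (k':ℤ) - 1 - ((friendsIn G P i).card : ℤ) := by
    have : ((P.filter fun j => ¬ G.Adj i j ∧ j ≠ i).card + (friendsIn G P i).card + 1 : ℕ)
        ≤ (k' : ℕ) := hen
    omega
  have hmul : (Fintype.card N : ℤ) * ((k:ℤ) - 1)
      ≤ (Fintype.card N : ℤ) * ((friendsIn G P i).card : ℤ) :=
    mul_le_mul_of_nonneg_left hfZ hn0
  rw [hfval]
  linarith


lemma clique_friendsIn {G : SimpleGraph N} {A : Finset N} {i : N}
    (hA : ∀ a ∈ A, ∀ b ∈ A, a ≠ b → G.Adj a b) (hi : i ∈ A) :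
    friendsIn G A i = A.erase i := by
  ext j
  simp only [mem_friendsIn, Finset.mem_erase]
  constructor
  · rintro ⟨hj, hadj⟩; exact ⟨hadj.ne', hj⟩
  · rintro ⟨hne, hj⟩; exact ⟨hj, hA i hi j hj (Ne.symm hne)⟩

lemma clique_fval {G : SimpleGraph N} {A : Finset N} {i : N}
    (hA : ∀ a ∈ A, ∀ b ∈ A, a ≠ b → G.Adj a b) (hi : i ∈ A) :
    fval G A i = (Fintype.card N : ℤ) * ((A.card : ℤ) - 1) := by
  have h1 := clique_friendsIn hA hi
  have h2 : (A.filter fun j => ¬ G.Adj i j ∧ j ≠ i) = ∅ := by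
    rw [Finset.filter_eq_empty_iff]
    intro j hj h
    exact h.1 (hA i hi j hj (Ne.symm h.2))
  have h3 : fval G A i = (Fintype.card N : ℤ) * ((friendsIn G A i).card : ℤ)
      - ((A.filter fun j => ¬ G.Adj i j ∧ j ≠ i).card : ℤ) := rfl
  rw [h3, h1, h2, Finset.card_erase_of_mem hi]
  have hc : 1 ≤ A.card := Finset.card_pos.mpr ⟨i, hi⟩
  have : ((A.card - 1 : ℕ) : ℤ) = (A.card : ℤ) - 1 := by omega
  rw [this]
  simp

lemma clique_utilEQ {G : SimpleGraph N} {A : Finset N} {i : N}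
    (hA : ∀ a ∈ A, ∀ b ∈ A, a ≠ b → G.Adj a b) (hi : i ∈ A) :
    utilMinEQ G A i = (Fintype.card N : ℤ) * ((A.card : ℤ) - 1) := by
  have h1 := clique_friendsIn hA hi
  unfold utilMinEQ
  simp only [h1, Finset.insert_erase hi]
  apply le_antisymm
  · exact le_trans (Finset.inf'_le _ hi) (le_of_eq (clique_fval hA hi))
  · exact Finset.le_inf' _ _ fun b hb => le_of_eq (clique_fval hA hb).symm

lemma kle_minK' (k : ℕ) : k + 1 ≤ minK' k := by
  unfold minK'; omega

lemma degL {G : SimpleGraph N} {k : ℕ} (hk : 3 ≤ k)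
    (hn : minK' k ≤ Fintype.card N) {C : Finset N} {x : N}
    (h : (Fintype.card N : ℤ) * ((k:ℤ)-1) - ((minK' k : ℤ) - (k:ℤ)) ≤ fval G C x) :
    k - 1 ≤ (friendsIn G C x).card := by
  have h2 := fval_le G C x
  have hkk' := kle_minK' k
  have hnZ : ((minK' k : ℕ):ℤ) ≤ (Fintype.card N : ℤ) := by exact_mod_cast hn
  have hkZ : (3:ℤ) ≤ (k:ℤ) := by exact_mod_cast hk
  have hk'Z : (k:ℤ) + 1 ≤ ((minK' k : ℕ) : ℤ) := by exact_mod_cast hkk'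
  have hnpos : (0:ℤ) < (Fintype.card N : ℤ) := by linarith
  have e : (Fintype.card N : ℤ) * ((k:ℤ)-1)
      = (Fintype.card N : ℤ) * ((k:ℤ)-2) + (Fintype.card N : ℤ) := by ring
  have h3 : (Fintype.card N : ℤ) * ((k:ℤ) - 2)
      < (Fintype.card N : ℤ) * (((friendsIn G C x).card : ℕ) : ℤ) := by linarith
  have h4 := lt_of_mul_lt_mul_left h3 (le_of_lt hnpos)
  omega

/-- Key lemma: every `C`-friend of a gadget player in a blocking coalition `C`
has valuation at least `L`. -/
lemma G_main {G : SimpleGraph N} {k : ℕ} (hk : 3 ≤ k) (hodd : Odd k)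
    {w : ℤ} (hw : (Fintype.card N : ℤ)^4 ≤ w)
    {Γ : CoalitionStructure N} {C : Finset N}
    (hC : Blocks (utilMinEQ G) Γ C ∨ Blocks (utilMinAL G w) Γ C)
    (hn : minK' k ≤ Fintype.card N)
    {g : N} (hgC : g ∈ C) {P : Finset N} (hgP : g ∈ P)
    (hpart : Γ.part g = P) (hcirc : IsCirculantGadget G (k-1) (minK' k) P) :
    ∀ x ∈ friendsIn G C g,
      (Fintype.card N : ℤ) * ((k:ℤ)-1) - ((minK' k : ℤ) - (k:ℤ)) ≤ fval G C x := by
  have hkk' := kle_minK' k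
  have hnZ : ((minK' k : ℕ):ℤ) ≤ (Fintype.card N : ℤ) := by exact_mod_cast hn
  have hkZ : (3:ℤ) ≤ (k:ℤ) := by exact_mod_cast hk
  have hk'Z : (k:ℤ) + 1 ≤ ((minK' k : ℕ) : ℤ) := by exact_mod_cast hkk'
  set n : ℤ := (Fintype.card N : ℤ) with hn'
  set L : ℤ := n * ((k:ℤ)-1) - ((minK' k : ℤ) - (k:ℤ)) with hL
  have hn4 : (4:ℤ) ≤ n := by linarith
  have hkk2 : k ≤ minK' k := by omega
  have hnk2 : (0:ℤ) ≤ n * ((k:ℤ)-2) := mul_nonneg (by linarith) (by linarith)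
  have hL1 : n * ((k:ℤ)-2) + (k:ℤ) ≤ L := by rw [hL]; linarith
  have hLpos : (0:ℤ) < L := by linarith
  have hPval : ∀ p ∈ P, L ≤ fval G P p := fun p hp =>
    circ_fval_ge hk hodd hkk2 hcirc hp
  have hw0 : (0:ℤ) ≤ w := le_trans (by positivity) hw
  have hn2w : n^2 ≤ w := by nlinarith
  rcases hC with ⟨-, hbl⟩ | ⟨-, hbl⟩
  · -- min-EQ
    have h1 := hbl g hgC
    rw [hpart] at h1
    intro x hx
    have hUG : L ≤ utilMinEQ G P g := by
      apply Finset.le_inf'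
      intro b hb
      rcases Finset.mem_insert.mp hb with rfl | hb
      · exact hPval b hgP
      · exact hPval b (friendsIn_subset G P g hb)
    have h2 : utilMinEQ G C g ≤ fval G C x :=
      Finset.inf'_le _ (Finset.mem_insert_of_mem hx)
    have : utilMinEQ G C g = utilMinEQ G C g := rfl
    linarith [h1, hUG, h2]
  · -- min-AL
    intro x hx
    have hne : (friendsIn G C g).Nonempty := ⟨x, hx⟩
    have h1 := hbl g hgC
    rw [hpart] at h1
    have hPne : (friendsIn G P g).Nonempty := by
      apply Finset.card_pos.mp
      have := circulant_deg hk hodd hkk2 hcirc g hgP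
      omega
    have hUeq : utilMinAL G w P g
        = fval G P g + w * (friendsIn G P g).inf' hPne (fval G P) := by
      unfold utilMinAL; rw [dif_pos hPne]
    have hinfP : L ≤ (friendsIn G P g).inf' hPne (fval G P) :=
      Finset.le_inf' _ _ fun b hb => hPval b (friendsIn_subset G P g hb)
    have hUG : L + w * L ≤ utilMinAL G w P g := by
      rw [hUeq]
      have := mul_le_mul_of_nonneg_left hinfP hw0
      have := hPval g hgP
      linarith
    have hUC : utilMinAL G w C g
        = fval G C g + w * (friendsIn G C g).inf' hne (fval G C) := by
      unfold utilMinAL; rw [dif_pos hne]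
    have hfvg : fval G C g ≤ n * n := by
      have h5 := fval_le G C g
      have h6 : ((friendsIn G C g).card : ℤ) ≤ n := by
        have := Finset.card_le_univ (friendsIn G C g)
        rw [hn']
        exact_mod_cast this
      nlinarith
    have hinfC : L ≤ (friendsIn G C g).inf' hne (fval G C) := by
      by_contra hlt
      push_neg at hlt
      have hle : (friendsIn G C g).inf' hne (fval G C) ≤ L - 1 := by omega
      have hmul : w * ((friendsIn G C g).inf' hne (fval G C)) ≤ w * (L - 1) :=
        mul_le_mul_of_nonneg_left hle hw0
      rw [hUC] at h1
      nlinarith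
    exact le_trans hinfC (Finset.inf'_le _ hx)

end MyHelpers

section ReductionLemmas
set_option linter.unusedSectionVars false
set_option maxHeartbeats 1000000

variable {V N : Type*} [Fintype V] [DecidableEq V] [Fintype N] [DecidableEq N]
variable {H : SimpleGraph V} {k : ℕ} {G : SimpleGraph N}
variable {Pv : V → Finset N} {Pe : Sym2 V → Finset N} {Pve : V → Sym2 V → Finset N}
variable {Ae : Sym2 V → Finset N} {vp : V → N} {ep : Sym2 V → N} {bp : V → Sym2 V → N}

/-- Classification of neighbors of a dummy player. -/
lemma dummy_nbr (R : MinReduction H k G Pv Pe Pve Ae vp ep bp)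
    {e : Sym2 V} (he : e ∈ H.edgeSet) {j : N} (hj : j ∈ Ae e) {p : N}
    (hadj : G.Adj j p) :
    p ∈ (Ae e).erase j ∨ p = ep e ∨ ∃ v, v ∈ e ∧ p = bp v e := by
  have hnj : ∀ {s : Finset N}, Disjoint s (Ae e) → j ∈ s → False :=
    fun hd hjs => Finset.disjoint_left.mp hd hjs hj
  rcases R.adj_cases j p hadj with
      ⟨v, hjv, -⟩ | ⟨e2, he2, hje, -⟩ | ⟨v, e2, he2, hv, hjb, -⟩ |
      ⟨e2, he2, hjA2, hpA2⟩ | ⟨v, e2, he2, hv, hcase⟩ | ⟨v, e2, he2, hv, hcase⟩ |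
      ⟨e2, he2, hcase⟩ | ⟨v, e2, he2, hv, hcase⟩
  · exact absurd hjv (fun h => hnj (R.disj_v_a v e he) h)
  · exact absurd hje (fun h => hnj (R.disj_e_a e2 he2 e he) h)
  · exact absurd hjb (fun h => hnj (R.disj_b_a v e2 he2 hv e he) h)
  · have he2e : e2 = e := by
      by_contra hne
      exact Finset.disjoint_left.mp (R.disj_aa e2 he2 e he hne) hjA2 hj
    subst he2e
    exact Or.inl (Finset.mem_erase.mpr ⟨hadj.ne', hpA2⟩)
  · rcases hcase with ⟨hjb, -⟩ | ⟨-, hjv⟩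
    · exact absurd (hjb ▸ R.bp_mem v e2 he2 hv)
        (fun h => hnj (R.disj_b_a v e2 he2 hv e he) h)
    · exact absurd (hjv ▸ R.vp_mem v) (fun h => hnj (R.disj_v_a v e he) h)
  · rcases hcase with ⟨hjb, -⟩ | ⟨-, hje⟩
    · exact absurd (hjb ▸ R.bp_mem v e2 he2 hv)
        (fun h => hnj (R.disj_b_a v e2 he2 hv e he) h)
    · exact absurd (hje ▸ R.ep_mem e2 he2) (fun h => hnj (R.disj_e_a e2 he2 e he) h)
  · rcases hcase with ⟨hjA2, hpe⟩ | ⟨-, hje⟩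
    · have he2e : e2 = e := by
        by_contra hne
        exact Finset.disjoint_left.mp (R.disj_aa e2 he2 e he hne) hjA2 hj
      subst he2e
      exact Or.inr (Or.inl hpe)
    · exact absurd (hje ▸ R.ep_mem e2 he2) (fun h => hnj (R.disj_e_a e2 he2 e he) h)
  · rcases hcase with ⟨hjA2, hpb⟩ | ⟨-, hjb⟩
    · have he2e : e2 = e := by
        by_contra hne
        exact Finset.disjoint_left.mp (R.disj_aa e2 he2 e he hne) hjA2 hj
      subst he2e
      exact Or.inr (Or.inr ⟨v, hv, hpb⟩)
    · exact absurd (hjb ▸ R.bp_mem v e2 he2 hv)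
        (fun h => hnj (R.disj_b_a v e2 he2 hv e he) h)

lemma dummy_friends_sub (R : MinReduction H k G Pv Pe Pve Ae vp ep bp)
    {e : Sym2 V} (he : e ∈ H.edgeSet) {j : N} (hj : j ∈ Ae e)
    {x y : V} (hexy : e = s(x, y)) (C : Finset N) :
    friendsIn G C j ⊆ (Ae e).erase j ∪ {ep e, bp x e, bp y e} := by
  intro p hp
  obtain ⟨hpC, hadj⟩ := mem_friendsIn.mp hp
  rcases dummy_nbr R he hj hadj with h | h | ⟨v, hv, h⟩
  · exact Finset.mem_union_left _ h
  · subst h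
    exact Finset.mem_union_right _ (by simp)
  · subst h
    rw [hexy] at hv
    rcases Sym2.mem_iff.mp hv with rfl | rfl
    · exact Finset.mem_union_right _ (by simp)
    · exact Finset.mem_union_right _ (by simp)

lemma dummy_card_bound (R : MinReduction H k G Pv Pe Pve Ae vp ep bp)
    {e : Sym2 V} (he : e ∈ H.edgeSet) {j : N} (hj : j ∈ Ae e)
    {x y : V} (hexy : e = s(x, y)) (C : Finset N) :
    (friendsIn G C j).card ≤ k - 1 := by
  have h1 := Finset.card_le_card (dummy_friends_sub R he hj hexy C)
  have h2 := Finset.card_union_le ((Ae e).erase j) ({ep e, bp x e, bp y e} : Finset N)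
  have h3 : ((Ae e).erase j).card = (Ae e).card - 1 := Finset.card_erase_of_mem hj
  have h4 := R.Ae_card e he
  have h5 : ({ep e, bp x e, bp y e} : Finset N).card ≤ 3 := by
    apply le_trans (Finset.card_insert_le _ _)
    have := Finset.card_insert_le (bp x e) ({bp y e} : Finset N)
    simp at this ⊢
    omega
  have h6 : 1 ≤ (Ae e).card := Finset.card_pos.mpr ⟨j, hj⟩
  omega

lemma dummy_full (R : MinReduction H k G Pv Pe Pve Ae vp ep bp)
    {e : Sym2 V} (he : e ∈ H.edgeSet) {j : N} (hj : j ∈ Ae e)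
    {x y : V} (hexy : e = s(x, y)) {C : Finset N}
    (hd : k - 1 ≤ (friendsIn G C j).card) (hk : 3 ≤ k) :
    ep e ∈ C ∧ bp x e ∈ C ∧ bp y e ∈ C := by
  have hsub := dummy_friends_sub R he hj hexy C
  have hcard : ((Ae e).erase j ∪ ({ep e, bp x e, bp y e} : Finset N)).card ≤ k - 1 := by
    have h2 := Finset.card_union_le ((Ae e).erase j) ({ep e, bp x e, bp y e} : Finset N)
    have h3 : ((Ae e).erase j).card = (Ae e).card - 1 := Finset.card_erase_of_mem hj
    have h4 := R.Ae_card e he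
    have h5 : ({ep e, bp x e, bp y e} : Finset N).card ≤ 3 := by
      apply le_trans (Finset.card_insert_le _ _)
      have := Finset.card_insert_le (bp x e) ({bp y e} : Finset N)
      simp at this ⊢
      omega
    have h6 : 1 ≤ (Ae e).card := Finset.card_pos.mpr ⟨j, hj⟩
    omega
  have heq : friendsIn G C j = (Ae e).erase j ∪ ({ep e, bp x e, bp y e} : Finset N) :=
    Finset.eq_of_subset_of_card_le hsub (le_trans hcard hd)
  have hmem : ∀ p ∈ ({ep e, bp x e, bp y e} : Finset N), p ∈ C := by
    intro p hp
    apply friendsIn_subset G C j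
    rw [heq]
    exact Finset.mem_union_right _ hp
  exact ⟨hmem _ (by simp), hmem _ (by simp), hmem _ (by simp)⟩

end ReductionLemmas


/-- Claim 2: in the min-based reduction instance, under min-EQ or min-AL utilities
(with weight `w ≥ n^4`), every player of a coalition `C` blocking `Γ` has at least
`k − 1` friends in `C`. -/
theorem min_blocking_min_degree {V N : Type*}
    [Fintype V] [DecidableEq V] [Fintype N] [DecidableEq N]
    (H : SimpleGraph V) (k : ℕ) (hk : 3 ≤ k) (hodd : Odd k)
    (G : SimpleGraph N) (Pv : V → Finset N) (Pe : Sym2 V → Finset N)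
    (Pve : V → Sym2 V → Finset N) (Ae : Sym2 V → Finset N)
    (vp : V → N) (ep : Sym2 V → N) (bp : V → Sym2 V → N)
    (R : MinReduction H k G Pv Pe Pve Ae vp ep bp)
    (w : ℤ) (hw : (Fintype.card N : ℤ) ^ 4 ≤ w)
    (Γ : CoalitionStructure N) (hΓ : IsMinGamma H Pv Pe Pve Ae Γ)
    (C : Finset N)
    (hC : Blocks (utilMinEQ G) Γ C ∨ Blocks (utilMinAL G w) Γ C) :
    ∀ i ∈ C, k - 1 ≤ (friendsIn G C i).card := by
  classical
  have hCsave := hC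
  intro i hiC
  -- basic numeric facts
  have hkk' := kle_minK' k
  obtain ⟨hCne, -⟩ : C.Nonempty ∧ True := by
    rcases hC with ⟨h, -⟩ | ⟨h, -⟩ <;> exact ⟨h, trivial⟩
  -- a gadget-player handler
  have gadget : ∀ P : Finset N, i ∈ P → Γ.part i = P →
      IsCirculantGadget G (k-1) (minK' k) P →
      (∀ e ∈ H.edgeSet, Disjoint P (Ae e)) → k - 1 ≤ (friendsIn G C i).card := by
    intro P hiP hpart hcirc hdisjA
    have hn : minK' k ≤ Fintype.card N := by
      have := circulant_card hcirc
      have h2 := Finset.card_le_univ P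
      omega
    have hnZ : ((minK' k : ℕ):ℤ) ≤ (Fintype.card N : ℤ) := by exact_mod_cast hn
    have hkZ : (3:ℤ) ≤ (k:ℤ) := by exact_mod_cast hk
    have hk'Z : (k:ℤ) + 1 ≤ ((minK' k : ℕ) : ℤ) := by exact_mod_cast hkk'
    set n : ℤ := (Fintype.card N : ℤ) with hn'
    set L : ℤ := n * ((k:ℤ)-1) - ((minK' k : ℤ) - (k:ℤ)) with hL
    have hn4 : (4:ℤ) ≤ n := by linarith
    have hkk2 : k ≤ minK' k := by omega
    have hnk2 : (0:ℤ) ≤ n * ((k:ℤ)-2) := mul_nonneg (by linarith) (by linarith)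
    have hL1 : n * ((k:ℤ)-2) + (k:ℤ) ≤ L := by rw [hL]; linarith
    have hLpos : (0:ℤ) < L := by linarith
    have hPval : ∀ p ∈ P, L ≤ fval G P p := fun p hp =>
      circ_fval_ge hk hodd hkk2 hcirc hp
    have hw0 : (0:ℤ) ≤ w := le_trans (by positivity) hw
    rcases hC with hB | hB
    · -- min-EQ: direct
      obtain ⟨-, hbl⟩ := hB
      have h1 := hbl i hiC
      rw [hpart] at h1
      have hUG : L ≤ utilMinEQ G P i := by
        apply Finset.le_inf'
        intro b hb
        rcases Finset.mem_insert.mp hb with rfl | hb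
        · exact hPval b hiP
        · exact hPval b (friendsIn_subset G P i hb)
      have h2 : utilMinEQ G C i ≤ fval G C i :=
        Finset.inf'_le _ (Finset.mem_insert_self _ _)
      exact degL hk hn (by linarith)
    · -- min-AL
      by_contra hcon
      push_neg at hcon
      obtain ⟨-, hbl⟩ := hB
      have h1 := hbl i hiC
      rw [hpart] at h1
      have hPne : (friendsIn G P i).Nonempty := by
        apply Finset.card_pos.mp
        have := circulant_deg hk hodd hkk2 hcirc i hiP
        omega
      have hUeq : utilMinAL G w P i
          = fval G P i + w * (friendsIn G P i).inf' hPne (fval G P) := by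
        unfold utilMinAL; rw [dif_pos hPne]
      have hinfP : L ≤ (friendsIn G P i).inf' hPne (fval G P) :=
        Finset.le_inf' _ _ fun b hb => hPval b (friendsIn_subset G P i hb)
      have hUG : L + w * L ≤ utilMinAL G w P i := by
        rw [hUeq]
        have := mul_le_mul_of_nonneg_left hinfP hw0
        have := hPval i hiP
        linarith
      -- C side: friends cannot be empty
      rcases (friendsIn G C i).eq_empty_or_nonempty with hemp | hne2
      · have hf0 := fval_nonpos_of_empty hemp
        have hUC : utilMinAL G w C i = fval G C i + w * 0 := by
          unfold utilMinAL
          rw [dif_neg (by rw [hemp]; exact Finset.not_nonempty_empty)]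
        rw [hUC] at h1
        have hwL : (0:ℤ) ≤ w * L := mul_nonneg hw0 (le_of_lt hLpos)
        linarith
      have hne2' := hne2
      obtain ⟨j, hj⟩ := hne2'
      have hUC : utilMinAL G w C i
          = fval G C i + w * (friendsIn G C i).inf' hne2 (fval G C) := by
        unfold utilMinAL; rw [dif_pos hne2]
      have hdile : ((friendsIn G C i).card : ℤ) ≤ (k:ℤ) - 2 := by
        have : (friendsIn G C i).card ≤ k - 2 := by omega
        omega
      have hfvi : fval G C i ≤ L - (k:ℤ) := by
        have h5 := fval_le G C i
        have h6 : n * ((friendsIn G C i).card : ℤ) ≤ n * ((k:ℤ)-2) :=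
          mul_le_mul_of_nonneg_left hdile (by linarith)
        linarith
          -- L < M
      have hM : L < (friendsIn G C i).inf' hne2 (fval G C) := by
        by_contra hMle
        push_neg at hMle
        have := mul_le_mul_of_nonneg_left hMle hw0
        rw [hUC] at h1
        linarith
      -- so fval of every C-friend of i is > L ; find a contradiction L ≤ fval i
      suffices hsuf : L ≤ fval G C i by linarith
      have hadjij : G.Adj i j := (mem_friendsIn.mp hj).2
      have hjC : j ∈ C := (mem_friendsIn.mp hj).1
      have hiback : ∀ g0 : N, g0 ∈ C → ∀ P0 : Finset N, g0 ∈ P0 → Γ.part g0 = P0 →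
          IsCirculantGadget G (k-1) (minK' k) P0 → G.Adj g0 i → L ≤ fval G C i := by
        intro g0 hg0C P0 hg0P hpart0 hcirc0 hadj0
        exact G_main hk hodd hw hCsave hn hg0C hg0P hpart0 hcirc0 i
          (mem_friendsIn.mpr ⟨hiC, hadj0⟩)
      rcases R.cover j with ⟨v2, hjv⟩ | ⟨e2, he2, hje⟩ | ⟨v2, e2, he2, hv2, hjb⟩ |
          ⟨e2, he2, hjA⟩
      · exact hiback j hjC (Pv v2) hjv (hΓ.1 v2 j hjv) (R.circ_v v2) hadjij.symm
      · exact hiback j hjC (Pe e2) hje (hΓ.2.1 e2 he2 j hje) (R.circ_e e2 he2) hadjij.symm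
      · exact hiback j hjC (Pve v2 e2) hjb (hΓ.2.2.1 v2 e2 he2 hv2 j hjb)
          (R.circ_ve v2 e2 he2 hv2) hadjij.symm
      · -- j is a dummy of e2
        obtain ⟨x, y, hexy⟩ : ∃ x y, e2 = s(x, y) := by
          induction e2 using Sym2.ind with | _ x y => exact ⟨x, y, rfl⟩
        have hxe : x ∈ e2 := by rw [hexy]; exact Sym2.mem_mk_left x y
        have hye : y ∈ e2 := by rw [hexy]; exact Sym2.mem_mk_right x y
        -- j has valuation > L, hence at least k-1 friends in C
        have hfvj : L ≤ fval G C j := by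
          have h8 : (friendsIn G C i).inf' hne2 (fval G C) ≤ fval G C j :=
            Finset.inf'_le _ hj
          linarith
        have hdj : k - 1 ≤ (friendsIn G C j).card := degL hk hn hfvj
        obtain ⟨hepC, hbxC, hbyC⟩ := dummy_full R he2 hjA hexy hdj hk
        -- classify i as a neighbor of the dummy j
        rcases dummy_nbr R he2 hjA hadjij.symm with hiA | hie | ⟨v, hv, hib⟩
        · exact absurd (Finset.mem_of_mem_erase hiA)
            (Finset.disjoint_left.mp (hdisjA e2 he2) hiP)
        · -- i = ep e2 : use bp x e2 ∈ C
          apply hiback (bp x e2) hbxC (Pve x e2) (R.bp_mem x e2 he2 hxe)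
            (hΓ.2.2.1 x e2 he2 hxe _ (R.bp_mem x e2 he2 hxe)) (R.circ_ve x e2 he2 hxe)
          rw [hie]
          exact R.adj_be x e2 he2 hxe
        · -- i = bp v e2 : use ep e2 ∈ C
          apply hiback (ep e2) hepC (Pe e2) (R.ep_mem e2 he2)
            (hΓ.2.1 e2 he2 _ (R.ep_mem e2 he2)) (R.circ_e e2 he2)
          rw [hib]
          exact (R.adj_be v e2 he2 hv).symm
  -- dispatch on the type of i
  rcases R.cover i with ⟨v, hiv⟩ | ⟨e, he, hie⟩ | ⟨v, e, he, hv, hib⟩ | ⟨e, he, hiA⟩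
  · exact gadget (Pv v) hiv (hΓ.1 v i hiv) (R.circ_v v) (fun e he => R.disj_v_a v e he)
  · exact gadget (Pe e) hie (hΓ.2.1 e he i hie) (R.circ_e e he)
      (fun f hf => R.disj_e_a e he f hf)
  · exact gadget (Pve v e) hib (hΓ.2.2.1 v e he hv i hib) (R.circ_ve v e he hv)
      (fun f hf => R.disj_b_a v e he hv f hf)
  · -- i is a dummy player of e
    obtain ⟨x, y, hexy⟩ : ∃ x y, e = s(x, y) := by
      induction e using Sym2.ind with | _ x y => exact ⟨x, y, rfl⟩
    have hxe : x ∈ e := by rw [hexy]; exact Sym2.mem_mk_left x y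
    have hye : y ∈ e := by rw [hexy]; exact Sym2.mem_mk_right x y
    have hpart : Γ.part i = Ae e := hΓ.2.2.2 e he i hiA
    have hAcard := R.Ae_card e he
    have hk4 : 4 ≤ k := by
      have : 1 ≤ (Ae e).card := Finset.card_pos.mpr ⟨i, hiA⟩
      omega
    have hk5 : 5 ≤ k := by
      obtain ⟨m, hm⟩ := hodd; omega
    have hn : minK' k ≤ Fintype.card N := by
      have := circulant_card (R.circ_e e he)
      have h2 := Finset.card_le_univ (Pe e)
      omega
    have hnZ : ((minK' k : ℕ):ℤ) ≤ (Fintype.card N : ℤ) := by exact_mod_cast hn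
    have hkZ : (5:ℤ) ≤ (k:ℤ) := by exact_mod_cast hk5
    have hk'Z : (k:ℤ) + 1 ≤ ((minK' k : ℕ) : ℤ) := by exact_mod_cast hkk'
    set n : ℤ := (Fintype.card N : ℤ) with hn'
    have hn6 : (6:ℤ) ≤ n := by linarith
    set L : ℤ := n * ((k:ℤ)-1) - ((minK' k : ℤ) - (k:ℤ)) with hL
    set nc : ℤ := n * ((k:ℤ) - 4) with hnc
    have hclq := R.Ae_clique e he
    have hncval : ((Ae e).card : ℤ) - 1 = (k:ℤ) - 4 := by
      rw [hAcard]; omega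
    have hval : ∀ j ∈ Ae e, fval G (Ae e) j = nc := by
      intro j hj
      rw [clique_fval hclq hj, hncval]
    have hw0 : (0:ℤ) ≤ w := le_trans (by positivity) hw
    have hncpos : (0:ℤ) < nc := by
      rw [hnc]; nlinarith
    -- the key finisher: a gadget friend of i in C gives the result
    have hiback : ∀ g0 : N, g0 ∈ C → ∀ P0 : Finset N, g0 ∈ P0 → Γ.part g0 = P0 →
        IsCirculantGadget G (k-1) (minK' k) P0 → G.Adj g0 i →
        k - 1 ≤ (friendsIn G C i).card := by
      intro g0 hg0C P0 hg0P hpart0 hcirc0 hadj0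
      exact degL hk hn (G_main hk hodd hw hCsave hn hg0C hg0P hpart0 hcirc0 i
        (mem_friendsIn.mpr ⟨hiC, hadj0⟩))
    have htrip : ∀ p : N, p ∈ C → (p = ep e ∨ p = bp x e ∨ p = bp y e) → G.Adj p i →
        k - 1 ≤ (friendsIn G C i).card := by
      intro p hpC hpcase hadjp
      rcases hpcase with rfl | rfl | rfl
      · exact hiback _ hpC (Pe e) (R.ep_mem e he) (hΓ.2.1 e he _ (R.ep_mem e he))
          (R.circ_e e he) hadjp
      · exact hiback _ hpC (Pve x e) (R.bp_mem x e he hxe)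
          (hΓ.2.2.1 x e he hxe _ (R.bp_mem x e he hxe)) (R.circ_ve x e he hxe) hadjp
      · exact hiback _ hpC (Pve y e) (R.bp_mem y e he hye)
          (hΓ.2.2.1 y e he hye _ (R.bp_mem y e he hye)) (R.circ_ve y e he hye) hadjp
    have hsplit := dummy_friends_sub R he hiA hexy C
    rcases hC with hB | hB
    · -- min-EQ
      obtain ⟨-, hbl⟩ := hB
      have h1 := hbl i hiC
      rw [hpart] at h1
      have hUG : utilMinEQ G (Ae e) i = nc := by
        rw [clique_utilEQ hclq hiA, hncval]
      rw [hUG] at h1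
      have h2 : utilMinEQ G C i ≤ fval G C i :=
        Finset.inf'_le _ (Finset.mem_insert_self _ _)
      have hfvi : nc < fval G C i := lt_of_lt_of_le h1 h2
      -- so i has at least k-3 friends in C
      have hd3 : k - 3 ≤ (friendsIn G C i).card := by
        have h5 := fval_le G C i
        by_contra hcon
        push_neg at hcon
        have : ((friendsIn G C i).card : ℤ) ≤ (k:ℤ) - 4 := by omega
        have h6 : n * ((friendsIn G C i).card : ℤ) ≤ n * ((k:ℤ)-4) :=
          mul_le_mul_of_nonneg_left this (by linarith)
        rw [hnc] at hfvi
        linarith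
      -- hence a gadget friend exists
      have hex : ∃ p ∈ friendsIn G C i, p = ep e ∨ p = bp x e ∨ p = bp y e := by
        by_contra hno
        push_neg at hno
        have hsub2 : friendsIn G C i ⊆ (Ae e).erase i := by
          intro p hp
          rcases Finset.mem_union.mp (hsplit hp) with h | h
          · exact h
          · have h' : p = ep e ∨ p = bp x e ∨ p = bp y e := by simpa using h
            have hcon := hno p hp
            exfalso
            rcases h' with rfl | rfl | rfl
            · exact hcon.1 rfl
            · exact hcon.2.1 rfl
            · exact hcon.2.2 rfl
        have := Finset.card_le_card hsub2
        rw [Finset.card_erase_of_mem hiA, hAcard] at this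
        omega
      obtain ⟨p, hp, hpcase⟩ := hex
      exact htrip p (friendsIn_subset G C i hp) hpcase (mem_friendsIn.mp hp).2.symm
    · -- min-AL
      obtain ⟨-, hbl⟩ := hB
      have h1 := hbl i hiC
      rw [hpart] at h1
      have hfrA : friendsIn G (Ae e) i = (Ae e).erase i := clique_friendsIn hclq hiA
      have hAene : ((Ae e).erase i).Nonempty := by
        apply Finset.card_pos.mp
        rw [Finset.card_erase_of_mem hiA, hAcard]
        omega
      have hUG : utilMinAL G w (Ae e) i = nc + w * nc := by
        unfold utilMinAL
        simp only [hfrA]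
        rw [dif_pos hAene]
        have hinf : ((Ae e).erase i).inf' hAene (fval G (Ae e)) = nc := by
          apply le_antisymm
          · obtain ⟨j0, hj0⟩ := hAene
            exact le_trans (Finset.inf'_le _ hj0)
              (le_of_eq (hval j0 (Finset.mem_of_mem_erase hj0)))
          · exact Finset.le_inf' _ _ fun b hb =>
              le_of_eq (hval b (Finset.mem_of_mem_erase hb)).symm
        rw [hinf, hval i hiA]
      rw [hUG] at h1
      rcases (friendsIn G C i).eq_empty_or_nonempty with hemp | hne2
      · exfalso
        have hf0 := fval_nonpos_of_empty hemp
        have hUC : utilMinAL G w C i = fval G C i + w * 0 := by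
          unfold utilMinAL
          rw [dif_neg (by rw [hemp]; exact Finset.not_nonempty_empty)]
        rw [hUC] at h1
        have hwnc : (0:ℤ) ≤ w * nc := mul_nonneg hw0 (le_of_lt hncpos)
        linarith
      have hne2' := hne2
      obtain ⟨j, hj⟩ := hne2'
      have hUC : utilMinAL G w C i
          = fval G C i + w * (friendsIn G C i).inf' hne2 (fval G C) := by
        unfold utilMinAL; rw [dif_pos hne2]
      rw [hUC] at h1
      -- i has at most k-1 friends in C
      have hdub : (friendsIn G C i).card ≤ k - 1 := dummy_card_bound R he hiA hexy C
      have hfvi : fval G C i ≤ nc + 3 * n := by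
        have h5 := fval_le G C i
        have h6 : ((friendsIn G C i).card : ℤ) ≤ (k:ℤ) - 1 := by omega
        have h7 : n * ((friendsIn G C i).card : ℤ) ≤ n * ((k:ℤ)-1) :=
          mul_le_mul_of_nonneg_left h6 (by linarith)
        rw [hnc]
        nlinarith
      -- the min over friends is at least nc
      have hM : nc ≤ (friendsIn G C i).inf' hne2 (fval G C) := by
        by_contra hMlt
        push_neg at hMlt
        have hle : (friendsIn G C i).inf' hne2 (fval G C) ≤ nc - 1 := by omega
        have := mul_le_mul_of_nonneg_left hle hw0
        have hnn : (0:ℤ) ≤ n := by linarith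
        have ha : 3 * n ≤ n * n :=
          mul_le_mul_of_nonneg_right (show (3:ℤ) ≤ n by linarith) hnn
        have hb : n * n ≤ n ^ 4 := by
          have h1 : (1:ℤ) ≤ n * n := by
            have := mul_le_mul_of_nonneg_right (show (1:ℤ) ≤ n by linarith) hnn
            linarith
          have h2 : 1 * (n * n) ≤ (n * n) * (n * n) :=
            mul_le_mul_of_nonneg_right h1 (by linarith)
          have h3 : n ^ 4 = (n * n) * (n * n) := by ring
          linarith
        have hw3n : 3 * n ≤ w := by linarith
        have hexp : w * (nc - 1) = w * nc - w := by ring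
        linarith
      -- classify j
      rcases Finset.mem_union.mp (hsplit hj) with hjA | hjtrip
      swap
      · -- j is a gadget friend of i
        have : j = ep e ∨ j = bp x e ∨ j = bp y e := by simpa using hjtrip
        exact htrip j (friendsIn_subset G C i hj) this (mem_friendsIn.mp hj).2.symm
      -- j is a dummy
      have hjAe : j ∈ Ae e := Finset.mem_of_mem_erase hjA
      have hjC : j ∈ C := friendsIn_subset G C i hj
      have hfvj : nc ≤ fval G C j :=
        le_trans hM (Finset.inf'_le _ hj)
      have hsplitj := dummy_friends_sub R he hjAe hexy C
      by_cases hg : ∃ p ∈ friendsIn G C j, p = ep e ∨ p = bp x e ∨ p = bp y e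
      · -- j has a gadget friend: then j has all its friends in C, incl. ep e
        obtain ⟨p, hp, hpcase⟩ := hg
        have hpC : p ∈ C := friendsIn_subset G C j hp
        have hadjpj : G.Adj p j := (mem_friendsIn.mp hp).2.symm
        have hLj : L ≤ fval G C j := by
          rcases hpcase with rfl | rfl | rfl
          · exact G_main hk hodd hw hCsave hn hpC (R.ep_mem e he)
              (hΓ.2.1 e he _ (R.ep_mem e he)) (R.circ_e e he) j
              (mem_friendsIn.mpr ⟨hjC, hadjpj⟩)
          · exact G_main hk hodd hw hCsave hn hpC (R.bp_mem x e he hxe)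
              (hΓ.2.2.1 x e he hxe _ (R.bp_mem x e he hxe)) (R.circ_ve x e he hxe) j
              (mem_friendsIn.mpr ⟨hjC, hadjpj⟩)
          · exact G_main hk hodd hw hCsave hn hpC (R.bp_mem y e he hye)
              (hΓ.2.2.1 y e he hye _ (R.bp_mem y e he hye)) (R.circ_ve y e he hye) j
              (mem_friendsIn.mpr ⟨hjC, hadjpj⟩)
        have hdj : k - 1 ≤ (friendsIn G C j).card := degL hk hn hLj
        obtain ⟨hepC, -, -⟩ := dummy_full R he hjAe hexy hdj hk
        exact htrip (ep e) hepC (Or.inl rfl) (R.adj_ae e he i hiA).symm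
      · -- no gadget friend of j : C ⊆ Ae e, contradiction
        exfalso
        push_neg at hg
        have hsubj : friendsIn G C j ⊆ (Ae e).erase j := by
          intro p hp
          rcases Finset.mem_union.mp (hsplitj hp) with h | h
          · exact h
          · have h' : p = ep e ∨ p = bp x e ∨ p = bp y e := by simpa using h
            have hcon := hg p hp
            exfalso
            rcases h' with rfl | rfl | rfl
            · exact hcon.1 rfl
            · exact hcon.2.1 rfl
            · exact hcon.2.2 rfl
        have hdj : (friendsIn G C j).card ≤ k - 4 := by
          have := Finset.card_le_card hsubj
          rw [Finset.card_erase_of_mem hjAe, hAcard] at this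
          omega
        have hdjZ : ((friendsIn G C j).card : ℤ) ≤ (k:ℤ) - 4 := by omega
        have hfvalj : fval G C j = n * ((friendsIn G C j).card : ℤ)
            - ((C.filter fun p => ¬ G.Adj j p ∧ p ≠ j).card : ℤ) := rfl
        have henj : ((C.filter fun p => ¬ G.Adj j p ∧ p ≠ j).card : ℤ) ≤ 0 := by
          have h6 : n * ((friendsIn G C j).card : ℤ) ≤ n * ((k:ℤ)-4) :=
            mul_le_mul_of_nonneg_left hdjZ (by linarith)
          rw [hfvalj] at hfvj
          rw [hnc] at hfvj
          linarith
        have hen0 : (C.filter fun p => ¬ G.Adj j p ∧ p ≠ j) = ∅ := by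
          apply Finset.card_eq_zero.mp
          omega
        have hCsub : C ⊆ Ae e := by
          intro c hc
          by_cases hcj : c = j
          · subst hcj; exact hjAe
          by_cases hadjc : G.Adj j c
          · exact Finset.mem_of_mem_erase
              (hsubj (mem_friendsIn.mpr ⟨hc, hadjc⟩))
          · exfalso
            have : c ∈ C.filter fun p => ¬ G.Adj j p ∧ p ≠ j :=
              Finset.mem_filter.mpr ⟨hc, hadjc, hcj⟩
            rw [hen0] at this
            exact absurd this (Finset.notMem_empty c)
        -- then every valuation is at most nc and i cannot strictly improve
        have hsubi : friendsIn G C i ⊆ (Ae e).erase i := by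
          intro p hp
          refine Finset.mem_erase.mpr ⟨?_, hCsub (friendsIn_subset G C i hp)⟩
          intro hpe
          exact not_mem_friendsIn_self G C i (hpe ▸ hp)
        have hdi : ((friendsIn G C i).card : ℤ) ≤ (k:ℤ) - 4 := by
          have := Finset.card_le_card hsubi
          rw [Finset.card_erase_of_mem hiA, hAcard] at this
          omega
        have hfvi2 : fval G C i ≤ nc := by
          have h5 := fval_le G C i
          have h6 : n * ((friendsIn G C i).card : ℤ) ≤ n * ((k:ℤ)-4) :=
            mul_le_mul_of_nonneg_left hdi (by linarith)
          rw [hnc]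
          linarith
        have hfvj2 : fval G C j ≤ nc := by
          have h5 := fval_le G C j
          have h6 : n * ((friendsIn G C j).card : ℤ) ≤ n * ((k:ℤ)-4) :=
            mul_le_mul_of_nonneg_left hdjZ (by linarith)
          rw [hnc]
          linarith
        have hMle : (friendsIn G C i).inf' hne2 (fval G C) ≤ nc :=
          le_trans (Finset.inf'_le _ hj) hfvj2
        have := mul_le_mul_of_nonneg_left hMle hw0
        linarith
end
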